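/- A connected signed graph G is coverable if and only if the negativeness of G is not equal to 1 and there is no cut edge b of G such that G - b has a balanced component. -/

import Mathlib

/-!
Common framework: signed multigraphs represented by finite vertex/edge sets over ℕ,
an incidence map into `Sym2 ℕ` and a sign map into `ℤ`.
-/

structure SignedGraph where
  verts : Finset ℕ
  edges : Finset ℕ
  ends : ℕ → Sym2 ℕ
  sgn : ℕ → ℤ
  ends_mem : ∀ e ∈ edges, ∀ v ∈ ends e, v ∈ verts
  sgn_unit : ∀ e ∈ edges, sgn e = 1 ∨ sgn e = -1

namespace SignedGraph

/-- `H` is a (signed) subgraph of `G`. -/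
def IsSubgraph (H G : SignedGraph) : Prop :=
  H.verts ⊆ G.verts ∧ H.edges ⊆ G.edges ∧
    ∀ e ∈ H.edges, H.ends e = G.ends e ∧ H.sgn e = G.sgn e

/-- `G` is the union of its subgraphs `H₁` and `H₂`. -/
def IsUnion (G H₁ H₂ : SignedGraph) : Prop :=
  IsSubgraph H₁ G ∧ IsSubgraph H₂ G ∧
    G.verts = H₁.verts ∪ H₂.verts ∧ G.edges = H₁.edges ∪ H₂.edges

/-- `G` is the union of its subgraphs `H₁`, `H₂` and `H₃`. -/
def IsUnion3 (G H₁ H₂ H₃ : SignedGraph) : Prop :=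
  IsSubgraph H₁ G ∧ IsSubgraph H₂ G ∧ IsSubgraph H₃ G ∧
    G.verts = H₁.verts ∪ H₂.verts ∪ H₃.verts ∧
    G.edges = H₁.edges ∪ H₂.edges ∪ H₃.edges

/-- Degree of a vertex: a loop contributes 2, an ordinary incident edge 1. -/
def degree (G : SignedGraph) (v : ℕ) : ℕ :=
  ∑ e ∈ G.edges, (if G.ends e = s(v, v) then 2 else if v ∈ G.ends e then 1 else 0)

/-- Adjacency via some edge. -/
def Adj (G : SignedGraph) (u v : ℕ) : Prop := ∃ e ∈ G.edges, G.ends e = s(u, v)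

/-- `G` is connected (and nonempty). -/
def Connected (G : SignedGraph) : Prop :=
  G.verts.Nonempty ∧ ∀ u ∈ G.verts, ∀ v ∈ G.verts, Relation.ReflTransGen G.Adj u v

/-- Number of negative edges. -/
def negEdgeCount (G : SignedGraph) : ℕ := (G.edges.filter fun e => G.sgn e = -1).card

/-- A circuit: a connected 2-regular graph. -/
def IsCircuit (C : SignedGraph) : Prop :=
  C.Connected ∧ C.edges.Nonempty ∧ ∀ v ∈ C.verts, C.degree v = 2

/-- A balanced circuit: evenly many negative edges. -/
def IsBalancedCircuit (C : SignedGraph) : Prop := C.IsCircuit ∧ C.negEdgeCount % 2 = 0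

def IsUnbalancedCircuit (C : SignedGraph) : Prop := C.IsCircuit ∧ C.negEdgeCount % 2 = 1

/-- `P` is an `x y`-path (possibly trivial, i.e. a single vertex, when `x = y`). -/
def IsPath (P : SignedGraph) (x y : ℕ) : Prop :=
  (x = y ∧ P.verts = {x} ∧ P.edges = ∅) ∨
  (x ≠ y ∧ P.Connected ∧ x ∈ P.verts ∧ y ∈ P.verts ∧
    P.degree x = 1 ∧ P.degree y = 1 ∧
    ∀ v ∈ P.verts, v ≠ x → v ≠ y → P.degree v = 2)

/-- Sign of a subgraph: the product of the signs of its edges. -/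
def sgnOf (P : SignedGraph) : ℤ := ∏ e ∈ P.edges, P.sgn e

/-- `T` is a tadpole at `x`: union of an `x y`-path and an unbalanced circuit
meeting the path exactly in its end `y`. -/
def IsTadpoleAt (T : SignedGraph) (x : ℕ) : Prop :=
  ∃ y P C, T.IsUnion P C ∧ IsPath P x y ∧ IsUnbalancedCircuit C ∧
    P.verts ∩ C.verts = {y} ∧ P.edges ∩ C.edges = ∅

/-- `T` is a tadpole at `x` whose tadpole-path contains the edge `e₀`. -/
def TadpolePathContains (T : SignedGraph) (x e₀ : ℕ) : Prop :=
  ∃ y P C, T.IsUnion P C ∧ IsPath P x y ∧ IsUnbalancedCircuit C ∧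
    P.verts ∩ C.verts = {y} ∧ P.edges ∩ C.edges = ∅ ∧ e₀ ∈ P.edges

/-- `T` is a tadpole at `x` whose unbalanced circuit lies in `K`. -/
def IsTadpoleWithCircuitIn (T : SignedGraph) (x : ℕ) (K : SignedGraph) : Prop :=
  ∃ y P C, T.IsUnion P C ∧ IsPath P x y ∧ IsUnbalancedCircuit C ∧
    P.verts ∩ C.verts = {y} ∧ P.edges ∩ C.edges = ∅ ∧ IsSubgraph C K

/-- A barbell: two unbalanced circuits joined by a (possibly trivial) path meeting
the circuits only in its ends. -/
def IsBarbell (B : SignedGraph) : Prop :=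
  ∃ x y P C₁ C₂, IsPath P x y ∧ IsUnbalancedCircuit C₁ ∧ IsUnbalancedCircuit C₂ ∧
    IsUnion3 B P C₁ C₂ ∧
    P.verts ∩ C₁.verts = {x} ∧ P.verts ∩ C₂.verts = {y} ∧
    C₁.verts ∩ C₂.verts = ({x} : Finset ℕ) ∩ ({y} : Finset ℕ) ∧
    P.edges ∩ C₁.edges = ∅ ∧ P.edges ∩ C₂.edges = ∅ ∧ C₁.edges ∩ C₂.edges = ∅

/-- A signed circuit: a balanced circuit or a barbell. -/
def IsSignedCircuit (S : SignedGraph) : Prop := IsBalancedCircuit S ∨ IsBarbell S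

/-- The number of members of the family `F` (with multiplicity) containing the edge `e`. -/
def coverCount (F : Multiset SignedGraph) (e : ℕ) : ℕ :=
  Multiset.card (F.filter fun S => e ∈ S.edges)

/-- `F` is a signed circuit `k`-cover of `G`. -/
def IsSignedCircuitCover (G : SignedGraph) (k : ℕ) (F : Multiset SignedGraph) : Prop :=
  (∀ S ∈ F, IsSubgraph S G ∧ IsSignedCircuit S) ∧ ∀ e ∈ G.edges, coverCount F e = k

def HasSixCover (G : SignedGraph) : Prop := ∃ F, IsSignedCircuitCover G 6 F

/-- `G` is coverable: some family of signed circuits covers every edge at least once. -/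
def Coverable (G : SignedGraph) : Prop :=
  ∃ F : Multiset SignedGraph, (∀ S ∈ F, IsSubgraph S G ∧ IsSignedCircuit S) ∧
    ∀ e ∈ G.edges, 0 < coverCount F e

/-- The vertex set `W` is connected within `G`. -/
def ConnectedWithin (G : SignedGraph) (W : Finset ℕ) : Prop :=
  ∀ u ∈ W, ∀ v ∈ W,
    Relation.ReflTransGen (fun a b => a ∈ W ∧ b ∈ W ∧ G.Adj a b) u v

/-- `G` has a `K₄`-minor (branch-set characterization). -/
def HasK4Minor (G : SignedGraph) : Prop :=
  ∃ B : Fin 4 → Finset ℕ,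
    (∀ i, (B i).Nonempty) ∧ (∀ i, B i ⊆ G.verts) ∧
    (∀ i j, i ≠ j → Disjoint (B i) (B j)) ∧
    (∀ i, G.ConnectedWithin (B i)) ∧
    (∀ i j, i ≠ j → ∃ e ∈ G.edges, ∃ u ∈ B i, ∃ v ∈ B j, G.ends e = s(u, v))

def K4MinorFree (G : SignedGraph) : Prop := ¬ G.HasK4Minor

/-- `H` is obtained from `G` by a sequence of switchings. -/
def SEquiv (G H : SignedGraph) : Prop :=
  G.verts = H.verts ∧ G.edges = H.edges ∧ (∀ e ∈ G.edges, G.ends e = H.ends e) ∧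
  ∃ χ : ℕ → ℤ, (∀ v, χ v = 1 ∨ χ v = -1) ∧
    ∀ e ∈ G.edges, ∀ u v, G.ends e = s(u, v) → H.sgn e = χ u * χ v * G.sgn e

/-- The negativeness of `G`: minimum number of negative edges over all equivalent graphs. -/
noncomputable def negativeness (G : SignedGraph) : ℕ :=
  sInf {n | ∃ H, SEquiv G H ∧ H.negEdgeCount = n}

/-- `G` is balanced: equivalent to a graph with no negative edges. -/
def Balanced (G : SignedGraph) : Prop := ∃ H, SEquiv G H ∧ H.negEdgeCount = 0

/-- Deleting a set of edges. -/
def deleteEdges (G : SignedGraph) (S : Finset ℕ) : SignedGraph where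
  verts := G.verts
  edges := G.edges \ S
  ends := G.ends
  sgn := G.sgn
  ends_mem := fun e he v hv => G.ends_mem e (Finset.mem_sdiff.mp he).1 v hv
  sgn_unit := fun e he => G.sgn_unit e (Finset.mem_sdiff.mp he).1

def deleteEdge (G : SignedGraph) (b : ℕ) : SignedGraph := G.deleteEdges {b}

/-- Deleting a vertex (and all incident edges). -/
def deleteVertex (G : SignedGraph) (x : ℕ) : SignedGraph where
  verts := G.verts.erase x
  edges := G.edges.filter fun e => x ∉ G.ends e
  ends := G.ends
  sgn := G.sgn
  ends_mem := by
    intro e he v hv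
    rw [Finset.mem_filter] at he
    exact Finset.mem_erase.mpr ⟨fun h => he.2 (h ▸ hv), G.ends_mem e he.1 v hv⟩
  sgn_unit := fun e he => G.sgn_unit e (Finset.mem_filter.mp he).1

/-- Deleting all loops. -/
def removeLoops (G : SignedGraph) : SignedGraph where
  verts := G.verts
  edges := G.edges.filter fun e => ¬ (G.ends e).IsDiag
  ends := G.ends
  sgn := G.sgn
  ends_mem := fun e he v hv => G.ends_mem e (Finset.mem_filter.mp he).1 v hv
  sgn_unit := fun e he => G.sgn_unit e (Finset.mem_filter.mp he).1

/-- `b` is a cut edge: deleting it disconnects its two ends. -/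
def IsCutEdge (G : SignedGraph) (b : ℕ) : Prop :=
  b ∈ G.edges ∧ ∃ u v, G.ends b = s(u, v) ∧
    ¬ Relation.ReflTransGen (G.deleteEdge b).Adj u v

/-- `H` is a connected component of `K`: a connected subgraph closed under incidence. -/
def IsComponent (K H : SignedGraph) : Prop :=
  IsSubgraph H K ∧ H.Connected ∧
    ∀ e ∈ K.edges, ∀ u v, K.ends e = s(u, v) → u ∈ H.verts → e ∈ H.edges ∧ v ∈ H.verts

/-- `G` is 2-connected: connected and without cut vertices. -/
def TwoConnected (G : SignedGraph) : Prop :=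
  G.Connected ∧ ∀ x ∈ G.verts, ∀ u ∈ (G.deleteVertex x).verts,
    ∀ v ∈ (G.deleteVertex x).verts, Relation.ReflTransGen (G.deleteVertex x).Adj u v

/-- A two-terminal signed graph with source `x` and target `y`
(`x = y` only for a single negative loop). -/
def IsTwoTerminal (H : SignedGraph) (x y : ℕ) : Prop :=
  H.Connected ∧ H.edges.Nonempty ∧ x ∈ H.verts ∧ y ∈ H.verts ∧
    (x = y → H.verts = {x} ∧ ∃ e, H.edges = {e} ∧ H.ends e = s(x, x) ∧ H.sgn e = -1)

/-- `H` is a piece of `G` at `{x, y}`: `G` is the parallel connection of `H`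
with another two-terminal graph. -/
def IsPiece (G H : SignedGraph) (x y : ℕ) : Prop :=
  IsTwoTerminal H x y ∧ ∃ H', IsTwoTerminal H' x y ∧ G.IsUnion H H' ∧
    H.verts ∩ H'.verts = ({x, y} : Finset ℕ) ∧ H.edges ∩ H'.edges = ∅

/-- `G` is the parallel connection of `H₁` and `H₂` with terminals `x ≠ y`. -/
def IsParallel2 (G H₁ H₂ : SignedGraph) (x y : ℕ) : Prop :=
  x ≠ y ∧ IsTwoTerminal H₁ x y ∧ IsTwoTerminal H₂ x y ∧
    G.IsUnion H₁ H₂ ∧ H₁.verts ∩ H₂.verts = ({x, y} : Finset ℕ) ∧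
    H₁.edges ∩ H₂.edges = ∅

/-- `G` is the parallel connection of the list `Hs` of pieces with terminals `x, y`. -/
def IsParallelDecomp (G : SignedGraph) (Hs : List SignedGraph) (x y : ℕ) : Prop :=
  x ≠ y ∧ (∀ H ∈ Hs, IsTwoTerminal H x y ∧ IsSubgraph H G) ∧
  Hs.Pairwise (fun H K => H.verts ∩ K.verts = ({x, y} : Finset ℕ) ∧ H.edges ∩ K.edges = ∅) ∧
  G.verts = Hs.foldr (fun H s => H.verts ∪ s) ∅ ∧
  G.edges = Hs.foldr (fun H s => H.edges ∪ s) ∅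

/-- `G` is the series connection of the two-terminal graphs `B 1, …, B n`,
where `B i` has terminals `xs (i-1)` and `xs i`. -/
def IsSeriesConn (G : SignedGraph) (n : ℕ) (B : ℕ → SignedGraph) (xs : ℕ → ℕ) : Prop :=
  1 ≤ n ∧
  (∀ i ∈ Finset.Icc 1 n, IsTwoTerminal (B i) (xs (i - 1)) (xs i)) ∧
  (∀ i ∈ Finset.Icc 1 n, IsSubgraph (B i) G) ∧
  G.verts = (Finset.Icc 1 n).biUnion (fun i => (B i).verts) ∧
  G.edges = (Finset.Icc 1 n).biUnion (fun i => (B i).edges) ∧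
  (∀ i ∈ Finset.Icc 1 n, ∀ j ∈ Finset.Icc 1 n, i < j →
    (B i).edges ∩ (B j).edges = ∅ ∧
    (B i).verts ∩ (B j).verts =
      ({xs (i - 1), xs i} : Finset ℕ) ∩ ({xs (j - 1), xs j} : Finset ℕ))

/-- The structured parts of a `Ψ_{xy}(t)`-cover of `H`:
`t` positive `xy`-paths, `t` negative `xy`-paths, `t` tadpoles at `x`,
`6 - 2t` tadpoles at `y`, and some signed circuits, forming a signed subgraph 6-cover. -/
def IsPsiCoverParts (H : SignedGraph) (x y : ℕ) (t : ℕ)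
    (Fp Fn Fx Fy Fc : Multiset SignedGraph) : Prop :=
  t ≤ 3 ∧
  (∀ S ∈ Fp + Fn + Fx + Fy + Fc, IsSubgraph S H) ∧
  (∀ e ∈ H.edges, coverCount (Fp + Fn + Fx + Fy + Fc) e = 6) ∧
  Multiset.card Fp = t ∧ Multiset.card Fn = t ∧
  Multiset.card Fx = t ∧ Multiset.card Fy = 6 - 2 * t ∧
  (∀ P ∈ Fp, IsPath P x y ∧ sgnOf P = 1) ∧
  (∀ P ∈ Fn, IsPath P x y ∧ sgnOf P = -1) ∧
  (∀ T ∈ Fx, IsTadpoleAt T x) ∧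
  (∀ T ∈ Fy, IsTadpoleAt T y) ∧
  (∀ C ∈ Fc, IsSignedCircuit C)

/-- `H` has a `Ψ_{xy}(t)`-cover. -/
def HasPsiCover (H : SignedGraph) (x y : ℕ) (t : ℕ) : Prop :=
  ∃ Fp Fn Fx Fy Fc, IsPsiCoverParts H x y t Fp Fn Fx Fy Fc

/-- `H` has a `Ψ_{xy}(2)`-cover in which no tadpole at `x` contains `y` and
no tadpole at `y` contains `x`. -/
def HasPsi2NoCross (H : SignedGraph) (x y : ℕ) : Prop :=
  ∃ Fp Fn Fx Fy Fc, IsPsiCoverParts H x y 2 Fp Fn Fx Fy Fc ∧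
    (∀ T ∈ Fx, y ∉ T.verts) ∧ (∀ T ∈ Fy, x ∉ T.verts)

/-- The structured parts of a `Ψ*_{xy}(2)`-cover of `H` relative to the edge `e₀ = xy`. -/
def IsPsiStarCoverParts (H : SignedGraph) (x y e₀ : ℕ)
    (Fp Fn Fc : Multiset SignedGraph) (Tx₁ Tx₂ Ty₁ Ty₂ : SignedGraph) : Prop :=
  e₀ ∈ H.edges ∧ H.ends e₀ = s(x, y) ∧
  IsPsiCoverParts H x y 2 Fp Fn {Tx₁, Tx₂} {Ty₁, Ty₂} Fc ∧
  y ∉ Tx₁.verts ∧ TadpolePathContains Tx₂ x e₀ ∧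
  x ∉ Ty₁.verts ∧ TadpolePathContains Ty₂ y e₀

/-- `H` has a `Ψ*_{xy}(2)`-cover. -/
def HasPsiStarCover (H : SignedGraph) (x y : ℕ) : Prop :=
  ∃ e₀ Fp Fn Fc Tx₁ Tx₂ Ty₁ Ty₂, IsPsiStarCoverParts H x y e₀ Fp Fn Fc Tx₁ Tx₂ Ty₁ Ty₂

/-- The signed graph `R₀(x, y)`: an unbalanced 2-circuit on `x, y`. -/
def IsR0 (H : SignedGraph) (x y : ℕ) : Prop :=
  x ≠ y ∧ H.verts = {x, y} ∧
  ∃ e f, e ≠ f ∧ H.edges = {e, f} ∧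
    H.ends e = s(x, y) ∧ H.sgn e = 1 ∧ H.ends f = s(x, y) ∧ H.sgn f = -1

/-- The signed graph `R₁(x, y)`: a positive triangle on `x, y, z` with a negative loop at `z`. -/
def IsR1 (H : SignedGraph) (x y : ℕ) : Prop :=
  ∃ z, x ≠ y ∧ x ≠ z ∧ y ≠ z ∧ H.verts = {x, y, z} ∧
  ∃ e₁ e₂ e₃ e₄, [e₁, e₂, e₃, e₄].Nodup ∧ H.edges = {e₁, e₂, e₃, e₄} ∧
    H.ends e₁ = s(x, y) ∧ H.sgn e₁ = 1 ∧
    H.ends e₂ = s(y, z) ∧ H.sgn e₂ = 1 ∧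
    H.ends e₃ = s(z, x) ∧ H.sgn e₃ = 1 ∧
    H.ends e₄ = s(z, z) ∧ H.sgn e₄ = -1

/-- The signed graph `R₂(x, y)`: a positive triangle on `x, y, w` with an extra
negative edge joining `w` and `y`. -/
def IsR2 (H : SignedGraph) (x y : ℕ) : Prop :=
  ∃ w, x ≠ y ∧ x ≠ w ∧ y ≠ w ∧ H.verts = {x, y, w} ∧
  ∃ e₁ e₂ e₃ e₄, [e₁, e₂, e₃, e₄].Nodup ∧ H.edges = {e₁, e₂, e₃, e₄} ∧
    H.ends e₁ = s(x, y) ∧ H.sgn e₁ = 1 ∧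
    H.ends e₂ = s(y, w) ∧ H.sgn e₂ = 1 ∧
    H.ends e₃ = s(w, x) ∧ H.sgn e₃ = 1 ∧
    H.ends e₄ = s(w, y) ∧ H.sgn e₄ = -1

/-- The signed graph `R₃(x, y)`: a positive 4-circuit `x y u w x` with an extra
negative edge joining `w` and `u`. -/
def IsR3 (H : SignedGraph) (x y : ℕ) : Prop :=
  ∃ u w, [x, y, u, w].Nodup ∧ H.verts = {x, y, u, w} ∧
  ∃ e₁ e₂ e₃ e₄ e₅, [e₁, e₂, e₃, e₄, e₅].Nodup ∧ H.edges = {e₁, e₂, e₃, e₄, e₅} ∧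
    H.ends e₁ = s(x, y) ∧ H.sgn e₁ = 1 ∧
    H.ends e₂ = s(y, u) ∧ H.sgn e₂ = 1 ∧
    H.ends e₃ = s(u, w) ∧ H.sgn e₃ = 1 ∧
    H.ends e₄ = s(w, x) ∧ H.sgn e₄ = 1 ∧
    H.ends e₅ = s(w, u) ∧ H.sgn e₅ = -1

/-- The signed graph `R₄(x, y)`: `R₃(x, y)` with an extra positive edge joining `x` and `u`. -/
def IsR4 (H : SignedGraph) (x y : ℕ) : Prop :=
  ∃ u w, [x, y, u, w].Nodup ∧ H.verts = {x, y, u, w} ∧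
  ∃ e₁ e₂ e₃ e₄ e₅ e₆, [e₁, e₂, e₃, e₄, e₅, e₆].Nodup ∧
    H.edges = {e₁, e₂, e₃, e₄, e₅, e₆} ∧
    H.ends e₁ = s(x, y) ∧ H.sgn e₁ = 1 ∧
    H.ends e₂ = s(y, u) ∧ H.sgn e₂ = 1 ∧
    H.ends e₃ = s(u, w) ∧ H.sgn e₃ = 1 ∧
    H.ends e₄ = s(w, x) ∧ H.sgn e₄ = 1 ∧
    H.ends e₅ = s(w, u) ∧ H.sgn e₅ = -1 ∧
    H.ends e₆ = s(x, u) ∧ H.sgn e₆ = 1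

/-- The signed graph `R₅(x, y)`: vertices `x, y, u, t, v`, positive edges
`vx, xy, yu, xu, ut, tv` and a negative edge joining `t` and `v`. -/
def IsR5 (H : SignedGraph) (x y : ℕ) : Prop :=
  ∃ u t v, [x, y, u, t, v].Nodup ∧ H.verts = {x, y, u, t, v} ∧
  ∃ e₁ e₂ e₃ e₄ e₅ e₆ e₇, [e₁, e₂, e₃, e₄, e₅, e₆, e₇].Nodup ∧
    H.edges = {e₁, e₂, e₃, e₄, e₅, e₆, e₇} ∧
    H.ends e₁ = s(v, x) ∧ H.sgn e₁ = 1 ∧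
    H.ends e₂ = s(x, y) ∧ H.sgn e₂ = 1 ∧
    H.ends e₃ = s(y, u) ∧ H.sgn e₃ = 1 ∧
    H.ends e₄ = s(x, u) ∧ H.sgn e₄ = 1 ∧
    H.ends e₅ = s(u, t) ∧ H.sgn e₅ = 1 ∧
    H.ends e₆ = s(t, v) ∧ H.sgn e₆ = 1 ∧
    H.ends e₇ = s(t, v) ∧ H.sgn e₇ = -1

/-- The two-terminal signed graph `D₁(x, y)`: vertices `x, z, y`, positive edges
`xz` and `zy`, and one negative edge parallel to `xz`. -/
def IsD1 (H : SignedGraph) (x y : ℕ) : Prop :=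
  ∃ z, x ≠ y ∧ x ≠ z ∧ y ≠ z ∧ H.verts = {x, z, y} ∧
  ∃ e₁ e₂ e₃, [e₁, e₂, e₃].Nodup ∧ H.edges = {e₁, e₂, e₃} ∧
    H.ends e₁ = s(x, z) ∧ H.sgn e₁ = 1 ∧
    H.ends e₂ = s(z, y) ∧ H.sgn e₂ = 1 ∧
    H.ends e₃ = s(x, z) ∧ H.sgn e₃ = -1

/-- The two-terminal signed graph `D₂(x, y)`: a positive path `x u v y` together
with one negative edge parallel to `uv`. -/
def IsD2 (H : SignedGraph) (x y : ℕ) : Prop :=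
  ∃ u v, [x, u, v, y].Nodup ∧ H.verts = {x, u, v, y} ∧
  ∃ e₁ e₂ e₃ e₄, [e₁, e₂, e₃, e₄].Nodup ∧ H.edges = {e₁, e₂, e₃, e₄} ∧
    H.ends e₁ = s(x, u) ∧ H.sgn e₁ = 1 ∧
    H.ends e₂ = s(u, v) ∧ H.sgn e₂ = 1 ∧
    H.ends e₃ = s(v, y) ∧ H.sgn e₃ = 1 ∧
    H.ends e₄ = s(u, v) ∧ H.sgn e₄ = -1

/-- `G` is the graph `P(H₁ ∪ y₁z, H₂ ∪ y₂z)`: the two-terminal graphs `H₁(x, y₁)`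
and `H₂(x, y₂)` glued at `x`, each extended by a new edge to a new vertex `z`. -/
def IsTwoBlockConn (G H₁ H₂ : SignedGraph) (x y₁ y₂ z e₁ e₂ : ℕ) : Prop :=
  IsTwoTerminal H₁ x y₁ ∧ IsTwoTerminal H₂ x y₂ ∧
  H₁.verts ∩ H₂.verts = {x} ∧ H₁.edges ∩ H₂.edges = ∅ ∧
  z ∉ H₁.verts ∧ z ∉ H₂.verts ∧
  e₁ ∉ H₁.edges ∧ e₁ ∉ H₂.edges ∧ e₂ ∉ H₁.edges ∧ e₂ ∉ H₂.edges ∧ e₁ ≠ e₂ ∧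
  G.verts = insert z (H₁.verts ∪ H₂.verts) ∧
  G.edges = insert e₁ (insert e₂ (H₁.edges ∪ H₂.edges)) ∧
  IsSubgraph H₁ G ∧ IsSubgraph H₂ G ∧
  G.ends e₁ = s(y₁, z) ∧ G.ends e₂ = s(y₂, z) ∧
  (G.sgn e₁ = 1 ∨ G.sgn e₁ = -1) ∧ (G.sgn e₂ = 1 ∨ G.sgn e₂ = -1)

/-- `G'` is obtained from `G` by adding a new negative loop `ℓ` at `x`. -/
def IsAddNegLoop (G' G : SignedGraph) (x ℓ : ℕ) : Prop :=
  x ∈ G.verts ∧ ℓ ∉ G.edges ∧ G'.verts = G.verts ∧ G'.edges = insert ℓ G.edges ∧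
  IsSubgraph G G' ∧ G'.ends ℓ = s(x, x) ∧ G'.sgn ℓ = -1

/-- A minimal counterexample to the main theorem: a coverable signed
`K₄`-minor-free graph without a signed circuit 6-cover, with the minimum
number of edges among all such graphs. -/
def MinimalCounterexample (G : SignedGraph) : Prop :=
  G.Coverable ∧ G.K4MinorFree ∧ ¬ G.HasSixCover ∧
    ∀ H : SignedGraph, H.Coverable → H.K4MinorFree → ¬ H.HasSixCover →
      G.edges.card ≤ H.edges.card

end SignedGraph
namespace SignedGraph

open Relation Finset

/-! ### Basic helpers -/

lemma sym2_rep (z : Sym2 ℕ) : ∃ a b, z = s(a, b) := by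
  induction z using Sym2.ind with
  | _ a b => exact ⟨a, b, rfl⟩

lemma IsSubgraph.rfl (G : SignedGraph) : IsSubgraph G G :=
  ⟨subset_rfl, subset_rfl, fun _ _ => ⟨Eq.refl _, Eq.refl _⟩⟩

lemma IsSubgraph.transfer {A B C : SignedGraph} (h1 : IsSubgraph A B) (h2 : IsSubgraph B C) :
    IsSubgraph A C := by
  refine ⟨h1.1.trans h2.1, h1.2.1.trans h2.2.1, fun e he => ?_⟩
  obtain ⟨h3, h4⟩ := h1.2.2 e he
  obtain ⟨h5, h6⟩ := h2.2.2 e (h1.2.1 he)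
  exact ⟨h3.trans h5, h4.trans h6⟩

lemma Adj.symm {G : SignedGraph} {u v : ℕ} (h : G.Adj u v) : G.Adj v u := by
  obtain ⟨e, he, hd⟩ := h
  exact ⟨e, he, hd.trans Sym2.eq_swap⟩

lemma reach_symm {G : SignedGraph} {u v : ℕ} (h : ReflTransGen G.Adj u v) :
    ReflTransGen G.Adj v u :=
  by
    induction h with
    | refl => exact .refl
    | tail _ hab ih => exact ReflTransGen.head (Adj.symm hab) ih

lemma Adj.mono {H G : SignedGraph} (hs : IsSubgraph H G) {u v : ℕ} (h : H.Adj u v) :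
    G.Adj u v := by
  obtain ⟨e, he, hd⟩ := h
  exact ⟨e, hs.2.1 he, ((hs.2.2 e he).1).symm.trans hd⟩

lemma reach_mono {H G : SignedGraph} (hs : IsSubgraph H G) {u v : ℕ}
    (h : ReflTransGen H.Adj u v) : ReflTransGen G.Adj u v :=
  ReflTransGen.mono (r := H.Adj) (p := G.Adj) (fun a b (hh : H.Adj a b) => Adj.mono hs hh) u v h

lemma deleteEdge_verts (G : SignedGraph) (b : ℕ) : (G.deleteEdge b).verts = G.verts := rfl

lemma deleteEdge_ends (G : SignedGraph) (b : ℕ) : (G.deleteEdge b).ends = G.ends := rfl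

lemma deleteEdge_sgn (G : SignedGraph) (b : ℕ) : (G.deleteEdge b).sgn = G.sgn := rfl

lemma mem_deleteEdge_edges {G : SignedGraph} {b e : ℕ} :
    e ∈ (G.deleteEdge b).edges ↔ e ∈ G.edges ∧ e ≠ b := by
  simp [deleteEdge, deleteEdges]

lemma deleteEdge_subgraph (G : SignedGraph) (b : ℕ) : IsSubgraph (G.deleteEdge b) G :=
  ⟨subset_rfl, fun e he => (Finset.mem_sdiff.mp he).1, fun _ _ => ⟨rfl, rfl⟩⟩

lemma subgraph_deleteEdge_of_not_mem {C G : SignedGraph} {b : ℕ} (h : IsSubgraph C G)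
    (hb : b ∉ C.edges) : IsSubgraph C (G.deleteEdge b) := by
  refine ⟨h.1, fun e he => ?_, fun e he => h.2.2 e he⟩
  exact mem_deleteEdge_edges.mpr ⟨h.2.1 he, fun hx => hb (hx ▸ he)⟩

lemma IsSubgraph.deleteEdge_mono {H G : SignedGraph} (h : IsSubgraph H G) (b : ℕ) :
    IsSubgraph (H.deleteEdge b) (G.deleteEdge b) := by
  refine ⟨h.1, fun e he => ?_, fun e he => h.2.2 e (mem_deleteEdge_edges.mp he).1⟩
  obtain ⟨h1, h2⟩ := mem_deleteEdge_edges.mp he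
  exact mem_deleteEdge_edges.mpr ⟨h.2.1 h1, h2⟩

/-- Incidence weight of an edge at a vertex. -/
def wt (G : SignedGraph) (v e : ℕ) : ℕ :=
  if G.ends e = s(v, v) then 2 else if v ∈ G.ends e then 1 else 0

lemma degree_eq_sum_wt (G : SignedGraph) (v : ℕ) : G.degree v = ∑ e ∈ G.edges, G.wt v e := rfl

lemma degree_deleteEdge {G : SignedGraph} {b : ℕ} (hb : b ∈ G.edges) (v : ℕ) :
    G.degree v = (G.deleteEdge b).degree v + G.wt v b := by
  have h1 : (G.deleteEdge b).edges = G.edges.erase b := by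
    simp [deleteEdge, deleteEdges, Finset.sdiff_singleton_eq_erase]
  rw [degree_eq_sum_wt, degree_eq_sum_wt, h1]
  have : ∀ e ∈ (G.deleteEdge b).edges, (G.deleteEdge b).wt v e = G.wt v e := fun _ _ => rfl
  rw [Finset.sum_congr rfl fun e he => (this e (h1 ▸ he))]
  rw [add_comm, Finset.add_sum_erase _ _ hb]

lemma wt_of_loop {G : SignedGraph} {b a : ℕ} (h : G.ends b = s(a, a)) (v : ℕ) :
    G.wt v b = if v = a then 2 else 0 := by
  unfold wt
  rw [h]
  by_cases hv : v = a
  · simp [hv]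
  · rw [if_neg (by rw [Sym2.eq_iff]; push_neg; tauto), if_neg (by simp [Sym2.mem_iff, hv]),
      if_neg hv]

lemma wt_of_ne {G : SignedGraph} {b u v' : ℕ} (h : G.ends b = s(u, v')) (huv : u ≠ v') (v : ℕ) :
    G.wt v b = if v = u ∨ v = v' then 1 else 0 := by
  unfold wt
  rw [h]
  rw [if_neg (by rw [Sym2.eq_iff]; push_neg; constructor <;> rintro rfl <;> simp [huv, huv.symm])]
  simp [Sym2.mem_iff]

/-! ### Unit (sign) helpers -/

lemma unit_mul {a b : ℤ} (ha : a = 1 ∨ a = -1) (hb : b = 1 ∨ b = -1) :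
    a * b = 1 ∨ a * b = -1 := by rcases ha with rfl | rfl <;> rcases hb with rfl | rfl <;> simp

lemma unit_sq {a : ℤ} (ha : a = 1 ∨ a = -1) : a * a = 1 := by
  rcases ha with rfl | rfl <;> norm_num

lemma unit_list_prod {l : List ℤ} (h : ∀ x ∈ l, x = 1 ∨ x = -1) :
    l.prod = 1 ∨ l.prod = -1 := by
  induction l with
  | nil => simp
  | cons a t ih =>
    rw [List.prod_cons]
    exact unit_mul (h a (by simp)) (ih fun x hx => h x (by simp [hx]))

end SignedGraph
namespace SignedGraph

open Relation Finset

/-! ### Multiplicative handshake and sign parity -/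

def mulFn (χ : ℕ → ℤ) : Sym2 ℕ → ℤ :=
  Sym2.lift ⟨fun a b => χ a * χ b, fun _ _ => mul_comm _ _⟩

@[simp] lemma mulFn_mk (χ : ℕ → ℤ) (a b : ℕ) : mulFn χ s(a, b) = χ a * χ b := rfl

theorem prod_mulFn (S : SignedGraph) (χ : ℕ → ℤ) :
    ∏ e ∈ S.edges, mulFn χ (S.ends e) = ∏ v ∈ S.verts, χ v ^ S.degree v := by
  have h1 : ∀ v, χ v ^ S.degree v = ∏ e ∈ S.edges, χ v ^ S.wt v e := by
    intro v
    rw [degree_eq_sum_wt, ← Finset.prod_pow_eq_pow_sum]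
  rw [Finset.prod_congr rfl fun v _ => h1 v, Finset.prod_comm]
  refine Finset.prod_congr rfl fun e he => ?_
  obtain ⟨a, b, hab⟩ := sym2_rep (S.ends e)
  by_cases hba : a = b
  · subst hba
    rw [hab, mulFn_mk]
    have ha : a ∈ S.verts := S.ends_mem e he a (by rw [hab]; simp)
    have : ∀ v, χ v ^ S.wt v e = if v = a then χ v * χ v else 1 := by
      intro v
      rw [wt_of_loop hab]
      by_cases hv : v = a <;> simp [hv, sq, pow_two]
    rw [Finset.prod_congr rfl fun v _ => this v, Finset.prod_ite_eq' S.verts a (fun v => χ v * χ v)] 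
    simp [ha]
  · rw [hab, mulFn_mk]
    have ha : a ∈ S.verts := S.ends_mem e he a (by rw [hab]; simp)
    have hb : b ∈ S.verts := S.ends_mem e he b (by rw [hab]; simp)
    have : ∀ v, χ v ^ S.wt v e = (if v = a then χ v else 1) * (if v = b then χ v else 1) := by
      intro v
      rw [wt_of_ne hab hba]
      by_cases hva : v = a
      · subst hva
        rw [if_pos (Or.inl rfl), if_pos rfl, if_neg hba, pow_one, mul_one]
      · by_cases hvb : v = b
        · subst hvb
          rw [if_pos (Or.inr rfl), if_neg hva, if_pos rfl, pow_one, one_mul]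
        · rw [if_neg (by tauto), if_neg hva, if_neg hvb, pow_zero, mul_one]
    rw [Finset.prod_congr rfl fun v _ => this v, Finset.prod_mul_distrib,
      Finset.prod_ite_eq' S.verts a (fun v => χ v), Finset.prod_ite_eq' S.verts b (fun v => χ v)]
    simp [ha, hb]

theorem prod_mulFn_eq_one (S : SignedGraph) (χ : ℕ → ℤ) (hχ : ∀ v, χ v = 1 ∨ χ v = -1)
    (heven : ∀ v ∈ S.verts, Even (S.degree v)) :
    ∏ e ∈ S.edges, mulFn χ (S.ends e) = 1 := by
  rw [prod_mulFn]
  refine Finset.prod_eq_one fun v hv => ?_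
  obtain ⟨k, hk⟩ := heven v hv
  rw [hk, ← two_mul, pow_mul]
  rcases hχ v with h | h <;> rw [h] <;> norm_num

theorem prod_sgn_eq_of_rel (S : SignedGraph) (σ τ : ℕ → ℤ) (χ : ℕ → ℤ)
    (hχ : ∀ v, χ v = 1 ∨ χ v = -1) (heven : ∀ v ∈ S.verts, Even (S.degree v))
    (hrel : ∀ e ∈ S.edges, σ e = mulFn χ (S.ends e) * τ e) :
    ∏ e ∈ S.edges, σ e = ∏ e ∈ S.edges, τ e := by
  rw [Finset.prod_congr rfl hrel, Finset.prod_mul_distrib, prod_mulFn_eq_one S χ hχ heven, one_mul]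

theorem sgnOf_eq_neg_one_pow (S : SignedGraph) : S.sgnOf = (-1 : ℤ) ^ S.negEdgeCount := by
  unfold sgnOf negEdgeCount
  rw [← Finset.prod_filter_mul_prod_filter_not S.edges (fun e => S.sgn e = -1)]
  rw [Finset.prod_congr rfl (fun e he => (Finset.mem_filter.mp he).2), Finset.prod_const]
  have : ∏ e ∈ S.edges.filter (fun e => ¬ S.sgn e = -1), S.sgn e = 1 := by
    refine Finset.prod_eq_one fun e he => ?_
    obtain ⟨he1, he2⟩ := Finset.mem_filter.mp he
    rcases S.sgn_unit e he1 with h | h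
    · exact h
    · exact absurd h he2
  rw [this, mul_one]

theorem negEdgeCount_odd_iff_sgnOf (S : SignedGraph) :
    S.negEdgeCount % 2 = 1 ↔ S.sgnOf = -1 := by
  rw [sgnOf_eq_neg_one_pow, ← Nat.odd_iff]
  constructor
  · exact fun h => h.neg_one_pow
  · intro h
    by_contra hodd
    rw [Nat.not_odd_iff_even] at hodd
    rw [hodd.neg_one_pow] at h
    norm_num at h

theorem negEdgeCount_even_iff_sgnOf (S : SignedGraph) :
    S.negEdgeCount % 2 = 0 ↔ S.sgnOf = 1 := by
  rw [sgnOf_eq_neg_one_pow, ← Nat.even_iff]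
  constructor
  · exact fun h => h.neg_one_pow
  · intro h
    by_contra heven
    rw [Nat.not_even_iff_odd] at heven
    rw [heven.neg_one_pow] at h
    norm_num at h

/-! ### Switchings -/

/-- All-positive switching certificate. -/
def PosSwitch (χ : ℕ → ℤ) (K : SignedGraph) : Prop :=
  ∀ e ∈ K.edges, ∀ u v, K.ends e = s(u, v) → χ u * χ v * K.sgn e = 1

lemma PosSwitch.mono {χ : ℕ → ℤ} {K H : SignedGraph} (hsub : IsSubgraph H K)
    (h : PosSwitch χ K) : PosSwitch χ H := by
  intro e he u v hends
  rw [(hsub.2.2 e he).2]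
  exact h e (hsub.2.1 he) u v (((hsub.2.2 e he).1).symm.trans hends)

lemma PosSwitch.sgn_eq {χ : ℕ → ℤ} {K : SignedGraph} (hχ : ∀ v, χ v = 1 ∨ χ v = -1)
    (h : PosSwitch χ K) {e u v : ℕ} (he : e ∈ K.edges) (hends : K.ends e = s(u, v)) :
    K.sgn e = χ u * χ v := by
  have h1 := h e he u v hends
  have h2 : χ u * χ v * (χ u * χ v * K.sgn e) = χ u * χ v * 1 := by rw [h1]
  calc K.sgn e = (χ u * χ u) * (χ v * χ v) * K.sgn e := by
        rw [unit_sq (hχ u), unit_sq (hχ v)]; ring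
    _ = χ u * χ v := by rw [mul_one] at h2; rw [← h2]; ring

def switchG (K : SignedGraph) (χ : ℕ → ℤ) (hχ : ∀ v, χ v = 1 ∨ χ v = -1) : SignedGraph where
  verts := K.verts
  edges := K.edges
  ends := K.ends
  sgn := fun e => mulFn χ (K.ends e) * K.sgn e
  ends_mem := K.ends_mem
  sgn_unit := by
    intro e he
    obtain ⟨a, b, hab⟩ := sym2_rep (K.ends e)
    show mulFn χ (K.ends e) * K.sgn e = 1 ∨ mulFn χ (K.ends e) * K.sgn e = -1
    rw [hab, mulFn_mk]
    exact unit_mul (unit_mul (hχ a) (hχ b)) (K.sgn_unit e he)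

theorem switchG_sequiv (K : SignedGraph) (χ : ℕ → ℤ) (hχ : ∀ v, χ v = 1 ∨ χ v = -1) :
    SEquiv K (switchG K χ hχ) := by
  refine ⟨rfl, rfl, fun _ _ => rfl, χ, hχ, fun e _ u v hends => ?_⟩
  show mulFn χ (K.ends e) * K.sgn e = χ u * χ v * K.sgn e
  rw [hends, mulFn_mk]

theorem balanced_of_posSwitch {K : SignedGraph} {χ : ℕ → ℤ} (hχ : ∀ v, χ v = 1 ∨ χ v = -1)
    (h : PosSwitch χ K) : K.Balanced := by
  refine ⟨switchG K χ hχ, switchG_sequiv K χ hχ, ?_⟩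
  unfold negEdgeCount
  rw [Finset.card_eq_zero, Finset.filter_eq_empty_iff]
  intro e he
  obtain ⟨a, b, hab⟩ := sym2_rep (K.ends e)
  show ¬ mulFn χ (K.ends e) * K.sgn e = -1
  rw [hab, mulFn_mk, mul_assoc, ← mul_assoc]
  rw [h e he a b hab]
  norm_num

theorem posSwitch_of_balanced {K : SignedGraph} (h : K.Balanced) :
    ∃ χ : ℕ → ℤ, (∀ v, χ v = 1 ∨ χ v = -1) ∧ PosSwitch χ K := by
  obtain ⟨H, ⟨hv, he, hends, χ, hχ, hsgn⟩, hcount⟩ := h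
  refine ⟨χ, hχ, fun e hee u v hends2 => ?_⟩
  have h1 : H.sgn e = χ u * χ v * K.sgn e := hsgn e hee u v hends2
  have h2 : H.sgn e = 1 := by
    have h3 : e ∈ H.edges := he ▸ hee
    rcases H.sgn_unit e h3 with h4 | h4
    · exact h4
    · exfalso
      have : e ∈ H.edges.filter (fun e => H.sgn e = -1) := Finset.mem_filter.mpr ⟨h3, h4⟩
      rw [Finset.card_eq_zero.mp hcount] at this
      exact absurd this (Finset.notMem_empty e)
  rw [← h1, h2]

theorem sequiv_refl (G : SignedGraph) : SEquiv G G := by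
  refine ⟨rfl, rfl, fun _ _ => rfl, fun _ => 1, fun _ => Or.inl rfl, fun e _ u v _ => by ring⟩

theorem negativeness_le {G H : SignedGraph} (h : SEquiv G H) :
    G.negativeness ≤ H.negEdgeCount :=
  Nat.sInf_le ⟨H, h, rfl⟩

theorem exists_min_sequiv (G : SignedGraph) :
    ∃ H, SEquiv G H ∧ H.negEdgeCount = G.negativeness := by
  have hne : {n | ∃ H, SEquiv G H ∧ H.negEdgeCount = n}.Nonempty :=
    ⟨G.negEdgeCount, G, sequiv_refl G, rfl⟩
  exact Nat.sInf_mem hne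

theorem balanced_of_negativeness_eq_zero {G : SignedGraph} (h : G.negativeness = 0) :
    G.Balanced := by
  obtain ⟨H, h1, h2⟩ := exists_min_sequiv G
  exact ⟨H, h1, h2.trans h⟩

/-! ### Parity of circuits in balanced / switched graphs -/

theorem prod_sgn_subgraph {C H : SignedGraph} (hsub : IsSubgraph C H) :
    C.sgnOf = ∏ e ∈ C.edges, H.sgn e :=
  Finset.prod_congr rfl fun e he => (hsub.2.2 e he).2

theorem sgnOf_of_posSwitch {H C : SignedGraph} {χ : ℕ → ℤ} (hχ : ∀ v, χ v = 1 ∨ χ v = -1)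
    (hpos : PosSwitch χ H) (hsub : IsSubgraph C H)
    (heven : ∀ v ∈ C.verts, Even (C.degree v)) : C.sgnOf = 1 := by
  have h1 : ∀ e ∈ C.edges, C.sgn e = mulFn χ (C.ends e) * 1 := by
    intro e he
    obtain ⟨a, b, hab⟩ := sym2_rep (C.ends e)
    rw [hab, mulFn_mk, mul_one, (hsub.2.2 e he).2]
    exact hpos.sgn_eq hχ (hsub.2.1 he) (((hsub.2.2 e he).1).symm.trans hab)
  have := prod_sgn_eq_of_rel C C.sgn (fun _ => 1) χ hχ heven h1
  unfold sgnOf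
  rw [this, Finset.prod_const_one]

theorem sgnOf_circuit_of_balanced {H C : SignedGraph} (hbal : H.Balanced)
    (hsub : IsSubgraph C H) (heven : ∀ v ∈ C.verts, Even (C.degree v)) : C.sgnOf = 1 := by
  obtain ⟨χ, hχ, hpos⟩ := posSwitch_of_balanced hbal
  exact sgnOf_of_posSwitch hχ hpos hsub heven

theorem prod_sgn_sequiv {G H C : SignedGraph} (hseq : SEquiv G H) (hsub : IsSubgraph C G)
    (heven : ∀ v ∈ C.verts, Even (C.degree v)) :
    ∏ e ∈ C.edges, H.sgn e = C.sgnOf := by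
  obtain ⟨hv, he, hends, χ, hχ, hsgn⟩ := hseq
  refine prod_sgn_eq_of_rel C (fun e => H.sgn e) C.sgn χ hχ heven fun e hee => ?_
  obtain ⟨a, b, hab⟩ := sym2_rep (C.ends e)
  have h1 : G.ends e = s(a, b) := ((hsub.2.2 e hee).1).symm.trans hab
  show H.sgn e = mulFn χ (C.ends e) * C.sgn e
  rw [hab, mulFn_mk, (hsub.2.2 e hee).2, hsgn e (hsub.2.1 hee) a b h1]

theorem circuit_even_deg {C : SignedGraph} (h : IsCircuit C) :
    ∀ v ∈ C.verts, Even (C.degree v) := fun v hv => by rw [h.2.2 v hv]; exact ⟨1, rfl⟩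

end SignedGraph
namespace SignedGraph

open Relation Finset
open scoped Classical

/-! ### Handshake parity -/

lemma even_card_odd_of_even_sum {S : Finset ℕ} {f : ℕ → ℕ} (h : Even (∑ v ∈ S, f v)) :
    Even ((S.filter fun v => Odd (f v)).card) := by
  have h1 : ∑ v ∈ S, f v % 2 = (S.filter fun v => Odd (f v)).card := by
    rw [Finset.card_eq_sum_ones, Finset.sum_filter]
    refine Finset.sum_congr rfl fun v _ => ?_
    by_cases hv : Odd (f v)
    · rw [if_pos hv, Nat.odd_iff.mp hv]
    · rw [if_neg hv, Nat.even_iff.mp (Nat.not_odd_iff_even.mp hv)]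
  have h2 : (∑ v ∈ S, f v) % 2 = (∑ v ∈ S, f v % 2) % 2 := Finset.sum_nat_mod S 2 f
  rw [Nat.even_iff] at h ⊢
  omega

lemma even_sum' {s : Finset ℕ} {f : ℕ → ℕ} (h : ∀ i ∈ s, Even (f i)) :
    Even (∑ i ∈ s, f i) := by
  classical
  induction s using Finset.induction with
  | empty => simp
  | @insert a s hnot ih =>
    rw [Finset.sum_insert hnot]
    exact (h a (by simp)).add (ih fun i hi => h i (by simp [hi]))

theorem even_degree_sum (K : SignedGraph) (S : Finset ℕ)
    (hcl : ∀ e ∈ K.edges, ∀ a b, K.ends e = s(a, b) → a ∈ S → b ∈ S) :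
    Even (∑ v ∈ S, K.degree v) := by
  have h1 : ∀ v, K.degree v = ∑ e ∈ K.edges, K.wt v e := fun _ => rfl
  have h2 : ∑ v ∈ S, ∑ e ∈ K.edges, K.wt v e = ∑ e ∈ K.edges, ∑ v ∈ S, K.wt v e :=
    Finset.sum_comm
  simp only [degree_eq_sum_wt]
  rw [h2]
  refine even_sum' fun e he => ?_
  obtain ⟨a, b, hab⟩ := sym2_rep (K.ends e)
  by_cases hba : a = b
  · subst hba
    have : ∀ v, K.wt v e = if v = a then 2 else 0 := wt_of_loop hab
    rw [Finset.sum_congr rfl fun v _ => this v, Finset.sum_ite_eq' S a (fun _ => 2)]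
    by_cases haS : a ∈ S <;> simp [haS]
  · have hiff : (a ∈ S) ↔ (b ∈ S) :=
      ⟨hcl e he a b hab, hcl e he b a (hab.trans Sym2.eq_swap)⟩
    have : ∀ v, K.wt v e = (if v = a then 1 else 0) + (if v = b then 1 else 0) := by
      intro v
      rw [wt_of_ne hab hba]
      by_cases hva : v = a
      · subst hva; rw [if_pos (Or.inl rfl), if_pos rfl, if_neg hba]
      · by_cases hvb : v = b
        · subst hvb; rw [if_pos (Or.inr rfl), if_neg hva, if_pos rfl]
        · rw [if_neg (by tauto), if_neg hva, if_neg hvb]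
    rw [Finset.sum_congr rfl fun v _ => this v, Finset.sum_add_distrib,
      Finset.sum_ite_eq' S a (fun _ => 1), Finset.sum_ite_eq' S b (fun _ => 1)]
    by_cases haS : a ∈ S
    · simp [haS, hiff.mp haS]
    · rw [if_neg haS, if_neg (fun hbS => haS (hiff.mpr hbS))]
      simp

theorem exists_odd_companion (K : SignedGraph) (u : ℕ) (hu : u ∈ K.verts)
    (hodd : Odd (K.degree u)) :
    ∃ w, w ≠ u ∧ Odd (K.degree w) ∧ ReflTransGen K.Adj u w := by
  set S := K.verts.filter fun v => ReflTransGen K.Adj u v with hS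
  have hcl : ∀ e ∈ K.edges, ∀ a b, K.ends e = s(a, b) → a ∈ S → b ∈ S := by
    intro e he a b hab haS
    obtain ⟨haV, har⟩ := Finset.mem_filter.mp haS
    refine Finset.mem_filter.mpr ⟨K.ends_mem e he b (by rw [hab]; simp), ?_⟩
    exact har.tail ⟨e, he, hab⟩
  have heven := even_degree_sum K S hcl
  have hcard := even_card_odd_of_even_sum heven
  have huS : u ∈ S.filter fun v => Odd (K.degree v) :=
    Finset.mem_filter.mpr ⟨Finset.mem_filter.mpr ⟨hu, .refl⟩, hodd⟩
  have h2 : 1 < (S.filter fun v => Odd (K.degree v)).card := by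
    rcases hcard with ⟨k, hk⟩
    have : 0 < (S.filter fun v => Odd (K.degree v)).card := Finset.card_pos.mpr ⟨u, huS⟩
    omega
  obtain ⟨w, hw, hwu⟩ := Finset.exists_mem_ne h2 u
  obtain ⟨hwS, hwodd⟩ := Finset.mem_filter.mp hw
  exact ⟨w, hwu, hwodd, (Finset.mem_filter.mp hwS).2⟩

/-! ### Bridges and even subgraphs -/

theorem even_subgraph_no_bridge {G C : SignedGraph} (hsub : IsSubgraph C G)
    (hdeg : ∀ v ∈ C.verts, C.degree v = 2) {b u v : ℕ} (hb : b ∈ C.edges)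
    (hends : G.ends b = s(u, v)) (huv : u ≠ v) :
    ReflTransGen (G.deleteEdge b).Adj u v := by
  have hCends : C.ends b = s(u, v) := (hsub.2.2 b hb).1.trans hends
  have hu : u ∈ C.verts := C.ends_mem b hb u (by rw [hCends]; simp)
  have hv : v ∈ C.verts := C.ends_mem b hb v (by rw [hCends]; simp)
  set D := C.deleteEdge b with hD
  have hdegu : C.degree u = D.degree u + C.wt u b := degree_deleteEdge hb u
  have hwtu : C.wt u b = 1 := by rw [wt_of_ne hCends huv]; simp
  have hDu : D.degree u = 1 := by
    have := hdeg u hu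
    omega
  obtain ⟨w, hwu, hwodd, hwreach⟩ := exists_odd_companion D u hu (by rw [hDu]; exact ⟨0, rfl⟩)
  have hwv : w = v := by
    by_contra hwv
    have hdegw : C.degree w = D.degree w + C.wt w b := degree_deleteEdge hb w
    have hwt : C.wt w b = 0 := by
      rw [wt_of_ne hCends huv]
      rw [if_neg (by tauto)]
    by_cases hwC : w ∈ C.verts
    · have := hdeg w hwC
      rw [Nat.odd_iff] at hwodd
      omega
    · have : D.degree w = 0 := by
        rw [degree_eq_sum_wt]
        refine Finset.sum_eq_zero fun e he => ?_
        have heC : e ∈ C.edges := (mem_deleteEdge_edges.mp he).1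
        obtain ⟨p, q, hpq⟩ := sym2_rep (C.ends e)
        show C.wt w e = 0
        by_cases hpqeq : p = q
        · subst hpqeq
          rw [wt_of_loop hpq, if_neg]
          rintro rfl
          exact hwC (C.ends_mem e heC w (by rw [hpq]; simp))
        · rw [wt_of_ne hpq hpqeq, if_neg]
          rintro (rfl | rfl)
          · exact hwC (C.ends_mem e heC w (by rw [hpq]; simp))
          · exact hwC (C.ends_mem e heC w (by rw [hpq]; simp))
      rw [this] at hwodd
      exact absurd hwodd (by decide)
  subst hwv
  exact reach_mono (hsub.deleteEdge_mono b) hwreach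

/-! ### Reachability after deleting an edge -/

theorem reach_deleteEdge_cases {K : SignedGraph} {b u v : ℕ} (hends : K.ends b = s(u, v))
    {x y : ℕ} (h : ReflTransGen K.Adj x y) :
    ReflTransGen (K.deleteEdge b).Adj x y ∨
      ((ReflTransGen (K.deleteEdge b).Adj x u ∨ ReflTransGen (K.deleteEdge b).Adj x v) ∧
       (ReflTransGen (K.deleteEdge b).Adj y u ∨ ReflTransGen (K.deleteEdge b).Adj y v)) := by
  induction h with
  | refl => exact Or.inl .refl
  | @tail c y hxc hcy ih =>
    obtain ⟨e, he, hde⟩ := hcy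
    by_cases heb : e = b
    · have hde' : K.ends b = s(c, y) := heb ▸ hde
      have hcy2 : (c = u ∧ y = v) ∨ (c = v ∧ y = u) := by
        rw [hends] at hde'
        rw [Sym2.eq_iff] at hde'
        tauto
      have hcside : ReflTransGen (K.deleteEdge b).Adj x u ∨
          ReflTransGen (K.deleteEdge b).Adj x v := by
        rcases ih with h1 | ⟨h1, _⟩
        · rcases hcy2 with ⟨rfl, rfl⟩ | ⟨rfl, rfl⟩
          · exact Or.inl h1
          · exact Or.inr h1
        · exact h1
      refine Or.inr ⟨hcside, ?_⟩
      rcases hcy2 with ⟨rfl, rfl⟩ | ⟨rfl, rfl⟩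
      · exact Or.inr .refl
      · exact Or.inl .refl
    · have hAdj : (K.deleteEdge b).Adj c y := ⟨e, mem_deleteEdge_edges.mpr ⟨he, heb⟩, hde⟩
      rcases ih with h1 | ⟨h1, h2⟩
      · exact Or.inl (h1.tail hAdj)
      · refine Or.inr ⟨h1, ?_⟩
        rcases h2 with h2 | h2
        · exact Or.inl ((ReflTransGen.single hAdj.symm).trans h2)
        · exact Or.inr ((ReflTransGen.single hAdj.symm).trans h2)

theorem reach_del_or {K : SignedGraph} {b u v x : ℕ} (hends : K.ends b = s(u, v))
    (h : ReflTransGen K.Adj x u) :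
    ReflTransGen (K.deleteEdge b).Adj x u ∨ ReflTransGen (K.deleteEdge b).Adj x v := by
  rcases reach_deleteEdge_cases hends h with h1 | ⟨h1, _⟩
  · exact Or.inl h1
  · exact h1

theorem reach_deleteEdge_of_loop {K : SignedGraph} {b a : ℕ} (hloop : K.ends b = s(a, a))
    {x y : ℕ} (h : ReflTransGen K.Adj x y) : ReflTransGen (K.deleteEdge b).Adj x y := by
  induction h with
  | refl => exact .refl
  | @tail c y hxc hcy ih =>
    obtain ⟨e, he, hde⟩ := hcy
    by_cases heb : e = b
    · have hde' : K.ends b = s(c, y) := heb ▸ hde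
      have : c = a ∧ y = a := by
        rw [hloop] at hde'; rw [Sym2.eq_iff] at hde'; tauto
      obtain ⟨rfl, rfl⟩ := this
      exact ih
    · exact ih.tail ⟨e, mem_deleteEdge_edges.mpr ⟨he, heb⟩, hde⟩

theorem connected_deleteEdge_loop {K : SignedGraph} (h : K.Connected) {b a : ℕ}
    (hloop : K.ends b = s(a, a)) : (K.deleteEdge b).Connected :=
  ⟨h.1, fun x hx y hy => reach_deleteEdge_of_loop hloop (h.2 x hx y hy)⟩

theorem connected_deleteEdge_of_reach {K : SignedGraph} (h : K.Connected) {b u v : ℕ}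
    (hb : b ∈ K.edges) (hends : K.ends b = s(u, v))
    (hr : ReflTransGen (K.deleteEdge b).Adj u v) : (K.deleteEdge b).Connected := by
  have hu : u ∈ K.verts := K.ends_mem b hb u (by rw [hends]; simp)
  have key : ∀ x ∈ K.verts, ReflTransGen (K.deleteEdge b).Adj x u := by
    intro x hx
    rcases reach_del_or hends (h.2 x hx u hu) with h1 | h1
    · exact h1
    · exact h1.trans (reach_symm hr)
  exact ⟨h.1, fun x hx y hy => (key x hx).trans (reach_symm (key y hy))⟩

end SignedGraph
namespace SignedGraph

open Relation Finset
open scoped Classical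

/-! ### Connected components -/

noncomputable def compAt (K : SignedGraph) (a : ℕ) : SignedGraph where
  verts := K.verts.filter fun v => ReflTransGen K.Adj a v
  edges := K.edges.filter fun e =>
    ∀ w ∈ K.ends e, w ∈ K.verts.filter fun v => ReflTransGen K.Adj a v
  ends := K.ends
  sgn := K.sgn
  ends_mem := fun e he w hw => (Finset.mem_filter.mp he).2 w hw
  sgn_unit := fun e he => K.sgn_unit e (Finset.mem_filter.mp he).1

lemma mem_compAt_verts {K : SignedGraph} {a v : ℕ} :
    v ∈ (compAt K a).verts ↔ v ∈ K.verts ∧ ReflTransGen K.Adj a v := Finset.mem_filter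

lemma compAt_ends (K : SignedGraph) (a : ℕ) : (compAt K a).ends = K.ends := rfl

lemma compAt_sub (K : SignedGraph) (a : ℕ) : IsSubgraph (compAt K a) K :=
  ⟨Finset.filter_subset _ _, Finset.filter_subset _ _, fun _ _ => ⟨rfl, rfl⟩⟩

lemma compAt_edge_of_end {K : SignedGraph} {a e w₀ : ℕ} (he : e ∈ K.edges)
    (hw₀ : w₀ ∈ K.ends e) (hr : ReflTransGen K.Adj a w₀) : e ∈ (compAt K a).edges := by
  refine Finset.mem_filter.mpr ⟨he, fun w hw => Finset.mem_filter.mpr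
    ⟨K.ends_mem e he w hw, ?_⟩⟩
  obtain ⟨p, q, hpq⟩ := sym2_rep (K.ends e)
  rw [hpq, Sym2.mem_iff] at hw hw₀
  have hadj : ∀ x y : ℕ, x = p ∨ x = q → y = p ∨ y = q → ReflTransGen K.Adj x y := by
    rintro x y (rfl | rfl) (rfl | rfl)
    · exact .refl
    · exact ReflTransGen.single ⟨e, he, hpq⟩
    · exact ReflTransGen.single ⟨e, he, hpq.trans Sym2.eq_swap⟩
    · exact .refl
  exact hr.trans (hadj w₀ w hw₀ hw)

lemma reach_compAt {K : SignedGraph} {a c : ℕ} (h : ReflTransGen K.Adj a c) :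
    ReflTransGen (compAt K a).Adj a c := by
  induction h with
  | refl => exact .refl
  | @tail c' c hac' hc'c ih =>
    obtain ⟨e, he, hde⟩ := hc'c
    refine ih.tail ⟨e, ?_, hde⟩
    exact compAt_edge_of_end he (by rw [hde]; simp) hac'

theorem compAt_connected {K : SignedGraph} {a : ℕ} (ha : a ∈ K.verts) :
    (compAt K a).Connected := by
  refine ⟨⟨a, mem_compAt_verts.mpr ⟨ha, .refl⟩⟩, fun u hu v hv => ?_⟩
  have hru := reach_compAt (mem_compAt_verts.mp hu).2
  have hrv := reach_compAt (mem_compAt_verts.mp hv).2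
  exact (reach_symm hru).trans hrv

theorem compAt_isComponent {K : SignedGraph} {a : ℕ} (ha : a ∈ K.verts) :
    IsComponent K (compAt K a) := by
  refine ⟨compAt_sub K a, compAt_connected ha, fun e he u v hends hu => ?_⟩
  have hru : ReflTransGen K.Adj a u := (mem_compAt_verts.mp hu).2
  refine ⟨compAt_edge_of_end he (by rw [hends]; simp) hru, ?_⟩
  refine mem_compAt_verts.mpr ⟨K.ends_mem e he v (by rw [hends]; simp), ?_⟩
  exact hru.tail ⟨e, he, hends⟩

theorem component_reach_closed {K H : SignedGraph} (h : IsComponent K H) {a c : ℕ}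
    (ha : a ∈ H.verts) (hr : ReflTransGen K.Adj a c) : c ∈ H.verts := by
  induction hr with
  | refl => exact ha
  | @tail c' c hac' hc'c ih =>
    obtain ⟨e, he, hde⟩ := hc'c
    exact (h.2.2 e he c' c hde ih).2

theorem subgraph_of_component {K H C : SignedGraph} (hcomp : IsComponent K H)
    (hC : IsSubgraph C K) (hCconn : C.Connected) {x : ℕ} (hx : x ∈ C.verts)
    (hxH : x ∈ H.verts) : IsSubgraph C H := by
  have hverts : ∀ c ∈ C.verts, c ∈ H.verts := fun c hc =>
    component_reach_closed hcomp hxH (reach_mono hC (hCconn.2 x hx c hc))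
  refine ⟨hverts, fun e he => ?_, fun e he => ?_⟩
  · obtain ⟨p, q, hpq⟩ := sym2_rep (C.ends e)
    have hKe : K.ends e = s(p, q) := ((hC.2.2 e he).1).symm.trans hpq
    have hp : p ∈ C.verts := C.ends_mem e he p (by rw [hpq]; simp)
    exact (hcomp.2.2 e (hC.2.1 he) p q hKe (hverts p hp)).1
  · obtain ⟨p, q, hpq⟩ := sym2_rep (C.ends e)
    have hKe : K.ends e = s(p, q) := ((hC.2.2 e he).1).symm.trans hpq
    have hp : p ∈ C.verts := C.ends_mem e he p (by rw [hpq]; simp)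
    have heH : e ∈ H.edges := (hcomp.2.2 e (hC.2.1 he) p q hKe (hverts p hp)).1
    obtain ⟨h1, h2⟩ := hcomp.1.2.2 e heH
    obtain ⟨h3, h4⟩ := hC.2.2 e he
    exact ⟨h3.trans h1.symm, h4.trans h2.symm⟩

lemma compAt_verts_disj {K : SignedGraph} {a b : ℕ} (h : ¬ ReflTransGen K.Adj a b) {v : ℕ}
    (hva : v ∈ (compAt K a).verts) (hvb : v ∈ (compAt K b).verts) : False :=
  h ((mem_compAt_verts.mp hva).2.trans (reach_symm (mem_compAt_verts.mp hvb).2))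

lemma compAt_edges_disj {K : SignedGraph} {a b : ℕ} (h : ¬ ReflTransGen K.Adj a b) {e : ℕ}
    (hea : e ∈ (compAt K a).edges) (heb : e ∈ (compAt K b).edges) : False := by
  obtain ⟨he, hwa⟩ := Finset.mem_filter.mp hea
  obtain ⟨_, hwb⟩ := Finset.mem_filter.mp heb
  obtain ⟨p, q, hpq⟩ := sym2_rep (K.ends e)
  have hp : p ∈ K.ends e := by rw [hpq]; simp
  exact compAt_verts_disj h (hwa p hp) (hwb p hp)

end SignedGraph
namespace SignedGraph

open Relation Finset

/-! ### Walks as lists -/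

inductive Walk (G : SignedGraph) : ℕ → ℕ → List ℕ → List ℕ → Prop
  | nil (v : ℕ) (hv : v ∈ G.verts) : Walk G v v [v] []
  | cons {v w : ℕ} {vs es : List ℕ} (u e : ℕ) (he : e ∈ G.edges)
      (hd : G.ends e = s(u, v)) (h : Walk G v w vs es) : Walk G u w (u :: vs) (e :: es)

namespace Walk

variable {G : SignedGraph} {x y z : ℕ} {vs es : List ℕ}

theorem verts_mem (h : Walk G x y vs es) : ∀ v ∈ vs, v ∈ G.verts := by
  induction h with
  | nil v hv => intro w hw; rw [List.mem_singleton] at hw; exact hw ▸ hv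
  | @cons v _ _ _ u e he hd h ih =>
    intro w hw
    rcases List.mem_cons.mp hw with rfl | hw
    · exact G.ends_mem e he w (by rw [hd]; simp)
    · exact ih w hw

theorem edges_mem (h : Walk G x y vs es) : ∀ e ∈ es, e ∈ G.edges := by
  induction h with
  | nil => simp
  | cons u e he hd h ih =>
    intro f hf
    rcases List.mem_cons.mp hf with rfl | hf
    · exact he
    · exact ih f hf

theorem head_cons (h : Walk G x y vs es) : ∃ t, vs = x :: t := by
  cases h with
  | nil v hv => exact ⟨[], rfl⟩
  | cons u e he hd h => exact ⟨_, rfl⟩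

theorem start_mem (h : Walk G x y vs es) : x ∈ vs := by
  obtain ⟨t, rfl⟩ := h.head_cons; simp

theorem end_mem (h : Walk G x y vs es) : y ∈ vs := by
  induction h with
  | nil => simp
  | cons u e he hd h ih => exact List.mem_cons_of_mem _ ih

theorem ends_sub (h : Walk G x y vs es) : ∀ e ∈ es, ∀ w ∈ G.ends e, w ∈ vs := by
  induction h with
  | nil => simp
  | @cons v _ vs' es' u e he hd h ih =>
    intro f hf w hw
    rcases List.mem_cons.mp hf with rfl | hf
    · rw [hd, Sym2.mem_iff] at hw
      rcases hw with rfl | rfl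
      · simp
      · exact List.mem_cons_of_mem _ h.start_mem
    · exact List.mem_cons_of_mem _ (ih f hf w hw)

theorem nodup_edges (h : Walk G x y vs es) (hnd : vs.Nodup) : es.Nodup := by
  induction h with
  | nil => simp
  | @cons v _ vs' es' u e he hd h ih =>
    rw [List.nodup_cons] at hnd
    refine List.nodup_cons.mpr ⟨fun hmem => ?_, ih hnd.2⟩
    exact hnd.1 (h.ends_sub e hmem u (by rw [hd]; simp))

theorem mono {H : SignedGraph} (h : Walk G x y vs es)
    (hV : ∀ v ∈ vs, v ∈ H.verts) (hE : ∀ e ∈ es, e ∈ H.edges)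
    (hEnds : ∀ e ∈ es, H.ends e = G.ends e) : Walk H x y vs es := by
  induction h with
  | nil v hv => exact nil v (hV v (by simp))
  | @cons v _ vs' es' u e he hd h ih =>
    refine cons u e (hE e (by simp)) ((hEnds e (by simp)).trans hd) (ih ?_ ?_ ?_)
    · exact fun w hw => hV w (List.mem_cons_of_mem _ hw)
    · exact fun f hf => hE f (List.mem_cons_of_mem _ hf)
    · exact fun f hf => hEnds f (List.mem_cons_of_mem _ hf)

theorem of_subgraph {H : SignedGraph} (hsub : IsSubgraph G H) (h : Walk G x y vs es) :
    Walk H x y vs es :=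
  h.mono (fun v hv => hsub.1 (h.verts_mem v hv)) (fun e he => hsub.2.1 (h.edges_mem e he))
    (fun e he => (hsub.2.2 e (h.edges_mem e he)).1.symm)

theorem reach (h : Walk G x y vs es) : ReflTransGen G.Adj x y := by
  induction h with
  | nil => exact .refl
  | cons u e he hd h ih => exact (ReflTransGen.single ⟨e, he, hd⟩).trans ih

theorem of_reach (hy : y ∈ G.verts) (h : ReflTransGen G.Adj x y) :
    ∃ vs es, Walk G x y vs es := by
  induction h using ReflTransGen.head_induction_on with
  | refl => exact ⟨[y], [], nil y hy⟩
  | head hadj _ ih =>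
    obtain ⟨vs, es, hw⟩ := ih
    obtain ⟨e, he, hd⟩ := hadj
    exact ⟨_, _, cons _ e he hd hw⟩

theorem snoc (h : Walk G x y vs es) (e : ℕ) (he : e ∈ G.edges) (hd : G.ends e = s(y, z))
    (hz : z ∈ G.verts) : Walk G x z (vs ++ [z]) (es ++ [e]) := by
  induction h generalizing z with
  | nil v hv => exact cons v e he hd (nil z hz)
  | cons u f hf hdf h ih => exact cons u f hf hdf (ih hd hz)

theorem reverse (h : Walk G x y vs es) : Walk G y x vs.reverse es.reverse := by
  induction h with
  | nil v hv => exact nil v hv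
  | @cons v _ vs' es' u e he hd h ih =>
    simp only [List.reverse_cons]
    refine ih.snoc e he (hd.trans Sym2.eq_swap) ?_
    exact G.ends_mem e he u (by rw [hd]; simp)

theorem join {vs' es' : List ℕ} (h : Walk G x y vs es) (h' : Walk G y z vs' es') :
    Walk G x z (vs ++ vs'.tail) (es ++ es') := by
  induction h with
  | nil v hv =>
    obtain ⟨t, rfl⟩ := h'.head_cons
    exact h'
  | cons u e he hd h ih => exact cons u e he hd (ih h')

theorem suffix_from (h : Walk G x y vs es) {u : ℕ} (hu : u ∈ vs) :
    ∃ vs2 es2, Walk G u y vs2 es2 ∧ vs2 <:+ vs ∧ ∀ e ∈ es2, e ∈ es := by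
  induction h with
  | nil v hv =>
    rw [List.mem_singleton] at hu
    subst hu
    exact ⟨[u], [], nil u hv, List.suffix_refl _, by simp⟩
  | @cons v _ vs' es' u' e he hd h ih =>
    by_cases huu : u = u'
    · subst huu
      exact ⟨u :: vs', e :: es', cons u e he hd h, List.suffix_refl _, fun _ h => h⟩
    · have hu2 : u ∈ vs' := by
        rcases List.mem_cons.mp hu with h1 | h1
        · exact absurd h1 huu
        · exact h1
      obtain ⟨vs2, es2, hw, hsuf, hes⟩ := ih hu2
      exact ⟨vs2, es2, hw, hsuf.trans (List.suffix_cons _ _),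
        fun f hf => List.mem_cons_of_mem _ (hes f hf)⟩

theorem dedup (h : Walk G x y vs es) : ∃ vs' es', Walk G x y vs' es' ∧ vs'.Nodup ∧
    (∀ v ∈ vs', v ∈ vs) ∧ ∀ e ∈ es', e ∈ es := by
  induction h with
  | nil v hv => exact ⟨[v], [], nil v hv, by simp, by simp, by simp⟩
  | @cons v _ vs' es' u e he hd h ih =>
    obtain ⟨vs2, es2, hw, hnd, hvmem, hemem⟩ := ih
    by_cases hu : u ∈ vs2
    · obtain ⟨vs3, es3, hw3, hsuf, hes3⟩ := hw.suffix_from hu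
      refine ⟨vs3, es3, hw3, hnd.sublist hsuf.sublist, ?_, ?_⟩
      · exact fun w hw' => List.mem_cons_of_mem _ (hvmem w (hsuf.subset hw'))
      · exact fun f hf => List.mem_cons_of_mem _ (hemem f (hes3 f hf))
    · refine ⟨u :: vs2, e :: es2, ?_, List.nodup_cons.mpr ⟨hu, hnd⟩, ?_, ?_⟩
      · obtain ⟨t, rfl⟩ := hw.head_cons
        exact cons u e he hd hw
      · intro w hw'
        rcases List.mem_cons.mp hw' with rfl | hw'
        · simp
        · exact List.mem_cons_of_mem _ (hvmem w hw')
      · intro f hf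
        rcases List.mem_cons.mp hf with rfl | hf
        · simp
        · exact List.mem_cons_of_mem _ (hemem f hf)

theorem split_first (h : Walk G x y vs es) (S : Finset ℕ) (hy : y ∈ S) :
    ∃ z p q p' q', Walk G x z p q ∧ Walk G z y p' q' ∧ vs = p ++ p'.tail ∧ es = q ++ q' ∧
      z ∈ S ∧ (∀ w ∈ p, w ∈ S → w = z) ∧ p' <:+ vs := by
  induction h with
  | nil v hv =>
    exact ⟨v, [v], [], [v], [], nil v hv, nil v hv, by simp, by simp, hy,
      by simp +contextual, List.suffix_refl _⟩
  | @cons v _ vs' es' u e he hd h ih =>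
    by_cases hu : u ∈ S
    · refine ⟨u, [u], [], u :: vs', e :: es', nil u (G.ends_mem e he u (by rw [hd]; simp)),
        cons u e he hd h, by simp, by simp, hu, by simp +contextual, List.suffix_refl _⟩
    · obtain ⟨z, p, q, p', q', hw1, hw2, hveq, heeq, hzS, honly, hsuf⟩ := ih hy
      obtain ⟨t, rfl⟩ := hw1.head_cons
      refine ⟨z, u :: v :: t, e :: q, p', q', cons u e he hd hw1, hw2, ?_, ?_, hzS, ?_, ?_⟩
      · rw [List.cons_append, ← hveq]
      · rw [List.cons_append, ← heeq]
      · intro w hw hwS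
        rcases List.mem_cons.mp hw with rfl | hw
        · exact absurd hwS hu
        · exact honly w hw hwS
      · exact hsuf.trans (List.suffix_cons _ _)

theorem consecutive (h : Walk G x y vs es) (hnd : vs.Nodup) :
    ∀ e ∈ es, ∃ a b, G.ends e = s(a, b) ∧ a ∈ vs ∧ b ∈ vs ∧ a ≠ b := by
  induction h with
  | nil => simp
  | @cons v _ vs' es' u e he hd h ih =>
    rw [List.nodup_cons] at hnd
    intro f hf
    rcases List.mem_cons.mp hf with rfl | hf
    · refine ⟨u, v, hd, by simp, List.mem_cons_of_mem _ h.start_mem, ?_⟩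
      rintro rfl
      exact hnd.1 h.start_mem
    · obtain ⟨a, b, h1, h2, h3, h4⟩ := ih hnd.2 f hf
      exact ⟨a, b, h1, List.mem_cons_of_mem _ h2, List.mem_cons_of_mem _ h3, h4⟩

theorem sgn_prod {χ : ℕ → ℤ} (hχ : ∀ v, χ v = 1 ∨ χ v = -1) (hpos : PosSwitch χ G)
    (h : Walk G x y vs es) : (es.map G.sgn).prod = χ x * χ y := by
  induction h with
  | nil v hv => simp [(unit_sq (hχ v)).symm]
  | @cons v w vs' es' u e he hd h ih =>
    rw [List.map_cons, List.prod_cons, ih, hpos.sgn_eq hχ he hd]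
    have h1 := unit_sq (hχ v)
    calc χ u * χ v * (χ v * χ w) = χ v * χ v * (χ u * χ w) := by ring
      _ = χ u * χ w := by rw [h1, one_mul]

end Walk

end SignedGraph
namespace SignedGraph

open Relation Finset

variable {G : SignedGraph} {x y : ℕ} {vs es : List ℕ}

theorem Walk.eq_nil (h : Walk G x y vs []) : x = y ∧ vs = [x] := by
  cases h
  exact ⟨rfl, rfl⟩

theorem Walk.ne_of_nodup (h : Walk G x y vs es) (hnd : vs.Nodup) (hne : es ≠ []) : x ≠ y := by
  cases h with
  | nil v hv => exact absurd rfl hne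
  | @cons v _ vs' es' u e he hd h =>
    rw [List.nodup_cons] at hnd
    rintro rfl
    exact hnd.1 h.end_mem

theorem degree_walk (h : Walk G x y vs es) :
    vs.Nodup → es ≠ [] → ∀ v, ∑ e ∈ es.toFinset, G.wt v e =
      if v = x ∨ v = y then 1 else if v ∈ vs then 2 else 0 := by
  induction h with
  | nil v hv => intro _ hne; exact absurd rfl hne
  | @cons v' w vs' es' u e he hd h ih =>
    intro hnd _ v
    rw [List.nodup_cons] at hnd
    have hv'mem : v' ∈ vs' := h.start_mem
    have huv' : u ≠ v' := fun hh => hnd.1 (hh ▸ hv'mem)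
    have hfnotin : e ∉ es'.toFinset := by
      rw [List.mem_toFinset]
      intro hmem
      exact hnd.1 (h.ends_sub e hmem u (by rw [hd]; simp))
    rw [List.toFinset_cons, Finset.sum_insert hfnotin]
    have hwt : G.wt v e = if v = u ∨ v = v' then 1 else 0 := wt_of_ne hd huv' v
    rcases List.eq_nil_or_concat es' with rfl | hesne
    · obtain ⟨rfl, rfl⟩ := h.eq_nil
      simp only [List.toFinset_nil, Finset.sum_empty, add_zero]
      rw [hwt]
      by_cases hv : v = u ∨ v = v'
      · rw [if_pos hv, if_pos hv]
      · rw [if_neg hv, if_neg hv, if_neg (by simpa using hv)]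
    · have hes' : es' ≠ [] := by rintro rfl; obtain ⟨a, b, hab⟩ := hesne; simp at hab
      have hne' : v' ≠ w := h.ne_of_nodup hnd.2 hes'
      have hymem : w ∈ vs' := h.end_mem
      have huy : u ≠ w := fun hh => hnd.1 (hh ▸ hymem)
      rw [ih hnd.2 hes' v, hwt]
      by_cases hvu : v = u
      · subst hvu
        rw [if_pos (Or.inl rfl), if_neg (not_or.mpr ⟨huv', huy⟩), if_neg hnd.1,
          if_pos (Or.inl rfl)]
      · by_cases hvv' : v = v'
        · subst hvv'
          rw [if_pos (Or.inr rfl), if_pos (Or.inl rfl),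
            if_neg (not_or.mpr ⟨fun hh => huv' hh.symm, hne'⟩),
            if_pos (List.mem_cons_of_mem _ hv'mem)]
        · by_cases hvy : v = w
          · subst hvy
            rw [if_neg (not_or.mpr ⟨hvu, hvv'⟩), if_pos (Or.inr rfl),
              if_pos (Or.inr rfl), zero_add]
          · rw [if_neg (not_or.mpr ⟨hvu, hvv'⟩), if_neg (not_or.mpr ⟨hvv', hvy⟩), zero_add]
            by_cases hvin : v ∈ vs'
            · rw [if_pos hvin, if_neg (not_or.mpr ⟨hvu, hvy⟩),
                if_pos (List.mem_cons_of_mem _ hvin)]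
            · rw [if_neg hvin, if_neg (not_or.mpr ⟨hvu, hvy⟩),
                if_neg (by simp [hvu, hvin])]

/-! ### Graphs built from walks -/

def walkGraph (G : SignedGraph) {x y : ℕ} {vs es : List ℕ} (h : Walk G x y vs es) :
    SignedGraph where
  verts := vs.toFinset
  edges := es.toFinset
  ends := G.ends
  sgn := G.sgn
  ends_mem := fun e he w hw =>
    List.mem_toFinset.mpr (h.ends_sub e (List.mem_toFinset.mp he) w hw)
  sgn_unit := fun e he => G.sgn_unit e (h.edges_mem e (List.mem_toFinset.mp he))

lemma walkGraph_verts (h : Walk G x y vs es) : (walkGraph G h).verts = vs.toFinset := rfl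

lemma walkGraph_edges (h : Walk G x y vs es) : (walkGraph G h).edges = es.toFinset := rfl

lemma walkGraph_sub (h : Walk G x y vs es) : IsSubgraph (walkGraph G h) G :=
  ⟨fun v hv => h.verts_mem v (List.mem_toFinset.mp hv),
   fun e he => h.edges_mem e (List.mem_toFinset.mp he), fun _ _ => ⟨rfl, rfl⟩⟩

lemma walkGraph_degree (h : Walk G x y vs es) (v : ℕ) :
    (walkGraph G h).degree v = ∑ e ∈ es.toFinset, G.wt v e := rfl

lemma walk_walkGraph (h : Walk G x y vs es) : Walk (walkGraph G h) x y vs es :=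
  h.mono (fun v hv => List.mem_toFinset.mpr hv) (fun e he => List.mem_toFinset.mpr he)
    (fun _ _ => rfl)

theorem walkGraph_connected (h : Walk G x y vs es) : (walkGraph G h).Connected := by
  refine ⟨⟨x, List.mem_toFinset.mpr h.start_mem⟩, fun u hu v hv => ?_⟩
  have hW := walk_walkGraph h
  obtain ⟨_, _, hwu, _, _⟩ := hW.suffix_from (List.mem_toFinset.mp hu)
  obtain ⟨_, _, hwv, _, _⟩ := hW.suffix_from (List.mem_toFinset.mp hv)
  exact hwu.reach.trans (reach_symm hwv.reach)

theorem walkGraph_isPath (h : Walk G x y vs es) (hnd : vs.Nodup) (hne : x ≠ y) :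
    IsPath (walkGraph G h) x y := by
  have hes : es ≠ [] := by
    rintro rfl
    exact hne h.eq_nil.1
  have hdeg := fun v => (walkGraph_degree h v).trans (degree_walk h hnd hes v)
  refine Or.inr ⟨hne, walkGraph_connected h, List.mem_toFinset.mpr h.start_mem,
    List.mem_toFinset.mpr h.end_mem, ?_, ?_, ?_⟩
  · rw [hdeg x, if_pos (Or.inl rfl)]
  · rw [hdeg y, if_pos (Or.inr rfl)]
  · intro v hv hvx hvy
    rw [hdeg v, if_neg (not_or.mpr ⟨hvx, hvy⟩), if_pos (List.mem_toFinset.mp hv)]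

def cycGraph (G : SignedGraph) {x y : ℕ} {vs es : List ℕ} (h : Walk G x y vs es) (f : ℕ)
    (hf : f ∈ G.edges) (hd : G.ends f = s(y, x)) : SignedGraph where
  verts := vs.toFinset
  edges := insert f es.toFinset
  ends := G.ends
  sgn := G.sgn
  ends_mem := by
    intro e he w hw
    rcases Finset.mem_insert.mp he with rfl | he
    · rw [hd, Sym2.mem_iff] at hw
      rcases hw with rfl | rfl
      · exact List.mem_toFinset.mpr h.end_mem
      · exact List.mem_toFinset.mpr h.start_mem
    · exact List.mem_toFinset.mpr (h.ends_sub e (List.mem_toFinset.mp he) w hw)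
  sgn_unit := by
    intro e he
    rcases Finset.mem_insert.mp he with rfl | he
    · exact G.sgn_unit e hf
    · exact G.sgn_unit e (h.edges_mem e (List.mem_toFinset.mp he))

variable {f : ℕ}

lemma cycGraph_verts (h : Walk G x y vs es) (hf : f ∈ G.edges) (hd : G.ends f = s(y, x)) :
    (cycGraph G h f hf hd).verts = vs.toFinset := rfl

lemma cycGraph_edges (h : Walk G x y vs es) (hf : f ∈ G.edges) (hd : G.ends f = s(y, x)) :
    (cycGraph G h f hf hd).edges = insert f es.toFinset := rfl

lemma cycGraph_sub (h : Walk G x y vs es) (hf : f ∈ G.edges) (hd : G.ends f = s(y, x)) :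
    IsSubgraph (cycGraph G h f hf hd) G := by
  refine ⟨fun v hv => h.verts_mem v (List.mem_toFinset.mp hv), fun e he => ?_,
    fun _ _ => ⟨rfl, rfl⟩⟩
  rcases Finset.mem_insert.mp he with rfl | he
  · exact hf
  · exact h.edges_mem e (List.mem_toFinset.mp he)

theorem cycGraph_connected (h : Walk G x y vs es) (hf : f ∈ G.edges)
    (hd : G.ends f = s(y, x)) : (cycGraph G h f hf hd).Connected := by
  have hW : Walk (cycGraph G h f hf hd) x y vs es :=
    h.mono (fun v hv => List.mem_toFinset.mpr hv)
      (fun e he => Finset.mem_insert_of_mem (List.mem_toFinset.mpr he)) (fun _ _ => rfl)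
  refine ⟨⟨x, List.mem_toFinset.mpr h.start_mem⟩, fun u hu v hv => ?_⟩
  obtain ⟨_, _, hwu, _, _⟩ := hW.suffix_from (List.mem_toFinset.mp hu)
  obtain ⟨_, _, hwv, _, _⟩ := hW.suffix_from (List.mem_toFinset.mp hv)
  exact hwu.reach.trans (reach_symm hwv.reach)

theorem cycGraph_degree (h : Walk G x y vs es) (hf : f ∈ G.edges) (hd : G.ends f = s(y, x))
    (hfes : f ∉ es) (v : ℕ) :
    (cycGraph G h f hf hd).degree v = G.wt v f + ∑ e ∈ es.toFinset, G.wt v e := by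
  have : (cycGraph G h f hf hd).degree v = ∑ e ∈ insert f es.toFinset, G.wt v e := rfl
  rw [this, Finset.sum_insert (by simpa using hfes)]

theorem cycGraph_isCircuit (h : Walk G x y vs es) (hnd : vs.Nodup) (hf : f ∈ G.edges)
    (hd : G.ends f = s(y, x)) (hfes : f ∉ es) : IsCircuit (cycGraph G h f hf hd) := by
  refine ⟨cycGraph_connected h hf hd, ⟨f, Finset.mem_insert_self _ _⟩, fun v hv => ?_⟩
  rw [cycGraph_degree h hf hd hfes v]
  rcases List.eq_nil_or_concat es with rfl | hesne
  · obtain ⟨rfl, rfl⟩ := h.eq_nil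
    have hvx : v = x := by
      have := List.mem_toFinset.mp hv
      simpa using this
    subst hvx
    simp only [List.toFinset_nil, Finset.sum_empty, add_zero]
    rw [wt_of_loop hd, if_pos rfl]
  · have hes : es ≠ [] := by rintro rfl; obtain ⟨a, b, hab⟩ := hesne; simp at hab
    have hne := h.ne_of_nodup hnd hes
    rw [degree_walk h hnd hes v, wt_of_ne hd (fun hh => hne hh.symm) v]
    have hvmem : v ∈ vs := List.mem_toFinset.mp hv
    by_cases hvx : v = x
    · subst hvx
      rw [if_pos (Or.inr rfl), if_pos (Or.inl rfl)]
    · by_cases hvy : v = y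
      · subst hvy
        rw [if_pos (Or.inl rfl), if_pos (Or.inr rfl)]
      · rw [if_neg (not_or.mpr ⟨hvy, hvx⟩), if_neg (not_or.mpr ⟨hvx, hvy⟩), if_pos hvmem]

theorem cycGraph_sgnOf (h : Walk G x y vs es) (hnd : vs.Nodup) (hf : f ∈ G.edges)
    (hd : G.ends f = s(y, x)) (hfes : f ∉ es) :
    (cycGraph G h f hf hd).sgnOf = G.sgn f * (es.map G.sgn).prod := by
  unfold sgnOf
  have h1 : (cycGraph G h f hf hd).edges = insert f es.toFinset := rfl
  rw [h1, Finset.prod_insert (by simpa using hfes)]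
  show G.sgn f * ∏ e ∈ es.toFinset, G.sgn e = _
  rw [List.prod_toFinset _ (h.nodup_edges hnd)]

/-! ### Trivial path and unions -/

def trivGraph (G : SignedGraph) (x : ℕ) : SignedGraph where
  verts := {x}
  edges := ∅
  ends := G.ends
  sgn := G.sgn
  ends_mem := by simp
  sgn_unit := by simp

lemma trivGraph_isPath (x : ℕ) : IsPath (trivGraph G x) x x := Or.inl ⟨rfl, rfl, rfl⟩

lemma trivGraph_sub {x : ℕ} (hx : x ∈ G.verts) : IsSubgraph (trivGraph G x) G :=
  ⟨by
    intro v hv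
    have hv2 : v ∈ ({x} : Finset ℕ) := hv
    rw [Finset.mem_singleton] at hv2
    exact hv2 ▸ hx, by simp [trivGraph], by simp [trivGraph]⟩

def un3 (G A B C : SignedGraph) (hA : IsSubgraph A G) (hB : IsSubgraph B G)
    (hC : IsSubgraph C G) : SignedGraph where
  verts := A.verts ∪ B.verts ∪ C.verts
  edges := A.edges ∪ B.edges ∪ C.edges
  ends := G.ends
  sgn := G.sgn
  ends_mem := by
    intro e he w hw
    rcases Finset.mem_union.mp he with he' | hce
    · rcases Finset.mem_union.mp he' with hae | hbe
      · exact Finset.mem_union_left _ (Finset.mem_union_left _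
          (A.ends_mem e hae w (by rw [(hA.2.2 e hae).1]; exact hw)))
      · exact Finset.mem_union_left _ (Finset.mem_union_right _
          (B.ends_mem e hbe w (by rw [(hB.2.2 e hbe).1]; exact hw)))
    · exact Finset.mem_union_right _
        (C.ends_mem e hce w (by rw [(hC.2.2 e hce).1]; exact hw))
  sgn_unit := by
    intro e he
    rcases Finset.mem_union.mp he with he' | hce
    · rcases Finset.mem_union.mp he' with hae | hbe
      · exact G.sgn_unit e (hA.2.1 hae)
      · exact G.sgn_unit e (hB.2.1 hbe)
    · exact G.sgn_unit e (hC.2.1 hce)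

lemma un3_sub {G A B C : SignedGraph} (hA : IsSubgraph A G) (hB : IsSubgraph B G)
    (hC : IsSubgraph C G) : IsSubgraph (un3 G A B C hA hB hC) G := by
  refine ⟨?_, ?_, fun _ _ => ⟨rfl, rfl⟩⟩
  · intro v hv
    rcases Finset.mem_union.mp hv with hv' | hv'
    · rcases Finset.mem_union.mp hv' with h | h
      · exact hA.1 h
      · exact hB.1 h
    · exact hC.1 hv'
  · intro e he
    rcases Finset.mem_union.mp he with he' | he'
    · rcases Finset.mem_union.mp he' with h | h
      · exact hA.2.1 h
      · exact hB.2.1 h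
    · exact hC.2.1 he'

lemma un3_isUnion3 {G A B C : SignedGraph} (hA : IsSubgraph A G) (hB : IsSubgraph B G)
    (hC : IsSubgraph C G) : IsUnion3 (un3 G A B C hA hB hC) A B C := by
  refine ⟨⟨fun v hv => Finset.mem_union_left _ (Finset.mem_union_left _ hv),
      fun e he => Finset.mem_union_left _ (Finset.mem_union_left _ he),
      fun e he => ⟨(hA.2.2 e he).1, (hA.2.2 e he).2⟩⟩,
    ⟨fun v hv => Finset.mem_union_left _ (Finset.mem_union_right _ hv),
      fun e he => Finset.mem_union_left _ (Finset.mem_union_right _ he),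
      fun e he => ⟨(hB.2.2 e he).1, (hB.2.2 e he).2⟩⟩,
    ⟨fun v hv => Finset.mem_union_right _ hv, fun e he => Finset.mem_union_right _ he,
      fun e he => ⟨(hC.2.2 e he).1, (hC.2.2 e he).2⟩⟩, rfl, rfl⟩

lemma mem_un3_edges {G A B C : SignedGraph} {hA : IsSubgraph A G} {hB : IsSubgraph B G}
    {hC : IsSubgraph C G} {e : ℕ} :
    e ∈ (un3 G A B C hA hB hC).edges ↔ e ∈ A.edges ∨ e ∈ B.edges ∨ e ∈ C.edges := by
  show e ∈ A.edges ∪ B.edges ∪ C.edges ↔ _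
  simp [Finset.mem_union, or_assoc]

end SignedGraph
namespace SignedGraph

open Relation Finset

/-! ### Graphs all of whose cycles are positive are balanced -/

def AllCycPos (K : SignedGraph) : Prop :=
  ∀ x y vs es f, Walk K x y vs es → vs.Nodup → f ∈ K.edges → f ∉ es →
    K.ends f = s(y, x) → K.sgn f * (es.map K.sgn).prod = 1

lemma AllCycPos.mono {K H : SignedGraph} (hsub : IsSubgraph H K) (h : AllCycPos K) :
    AllCycPos H := by
  intro x y vs es f hw hnd hf hfes hends
  have hmap : es.map K.sgn = es.map H.sgn :=
    List.map_congr_left fun e he => ((hsub.2.2 e (hw.edges_mem e he)).2).symm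
  have h1 := h x y vs es f (hw.of_subgraph hsub) hnd (hsub.2.1 hf) hfes
    (((hsub.2.2 f hf).1).symm.trans hends)
  rw [hmap] at h1
  rw [(hsub.2.2 f hf).2]
  exact h1

theorem posSwitch_of_allCycPos :
    ∀ n (K : SignedGraph), K.edges.card = n → K.Connected → AllCycPos K →
      ∃ χ : ℕ → ℤ, (∀ v, χ v = 1 ∨ χ v = -1) ∧ PosSwitch χ K := by
  intro n
  induction n using Nat.strong_induction_on with
  | _ n ih =>
    intro K hcard hconn hcyc
    rcases Finset.eq_empty_or_nonempty K.edges with hemp | ⟨b, hb⟩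
    · exact ⟨fun _ => 1, fun _ => Or.inl rfl,
        fun e he => absurd (hemp ▸ he) (Finset.notMem_empty e)⟩
    have hcard' : (K.deleteEdge b).edges.card < n := by
      rw [← hcard]
      refine Finset.card_lt_card ?_
      rw [Finset.ssubset_iff_of_subset (fun e he => (mem_deleteEdge_edges.mp he).1)]
      exact ⟨b, hb, fun hmem => (mem_deleteEdge_edges.mp hmem).2 rfl⟩
    obtain ⟨a, c, hac⟩ := sym2_rep (K.ends b)
    have haV : a ∈ K.verts := K.ends_mem b hb a (by rw [hac]; simp)
    have hcV : c ∈ K.verts := K.ends_mem b hb c (by rw [hac]; simp)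
    by_cases haceq : a = c
    · -- b is a loop
      subst haceq
      have hconn' := connected_deleteEdge_loop hconn hac
      obtain ⟨χ, hχ, hpos⟩ := ih _ hcard' (K.deleteEdge b) rfl hconn'
        (hcyc.mono (deleteEdge_subgraph K b))
      refine ⟨χ, hχ, fun e he u v hends => ?_⟩
      by_cases heb : e = b
      · rw [heb]
        rw [heb] at hends
        have huv : u = a ∧ v = a := by
          rw [hac, Sym2.eq_iff] at hends; tauto
        obtain ⟨hu1, hv1⟩ := huv
        rw [hu1, hv1]
        have hsgn1 : K.sgn b * ((List.nil).map K.sgn).prod = 1 :=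
          hcyc a a [a] [] b (Walk.nil a haV) (by simp) hb (by simp) hac
        simp only [List.map_nil, List.prod_nil, mul_one] at hsgn1
        rw [hsgn1, mul_one]
        exact unit_sq (hχ a)
      · exact hpos e (mem_deleteEdge_edges.mpr ⟨he, heb⟩) u v hends
    · by_cases hbr : ReflTransGen (K.deleteEdge b).Adj a c
      · -- b is not a bridge
        have hconn' := connected_deleteEdge_of_reach hconn hb hac hbr
        obtain ⟨χ, hχ, hpos⟩ := ih _ hcard' (K.deleteEdge b) rfl hconn'
          (hcyc.mono (deleteEdge_subgraph K b))
        refine ⟨χ, hχ, fun e he u v hends => ?_⟩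
        by_cases heb : e = b
        · rw [heb]
          rw [heb] at hends
          obtain ⟨vs0, es0, hw0⟩ := Walk.of_reach (G := K.deleteEdge b) haV (reach_symm hbr)
          obtain ⟨vs, es, hw, hnd, _, hemem⟩ := hw0.dedup
          have hfes : b ∉ es := by
            intro hmem
            exact (mem_deleteEdge_edges.mp (hw.edges_mem b hmem)).2 rfl
          have hwK : Walk K c a vs es := hw.of_subgraph (deleteEdge_subgraph K b)
          have h1 : K.sgn b * (es.map K.sgn).prod = 1 := hcyc c a vs es b hwK hnd hb hfes hac
          have h2 : (es.map K.sgn).prod = χ c * χ a := by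
            have h3 := Walk.sgn_prod hχ hpos hw
            have h4 : es.map (K.deleteEdge b).sgn = es.map K.sgn := rfl
            rw [h4] at h3
            exact h3
          rw [h2] at h1
          have huv : (u = a ∧ v = c) ∨ (u = c ∧ v = a) := by
            rw [hac, Sym2.eq_iff] at hends; tauto
          rcases huv with ⟨hu1, hv1⟩ | ⟨hu1, hv1⟩ <;> rw [hu1, hv1]
          · calc χ a * χ c * K.sgn b = K.sgn b * (χ c * χ a) := by ring
              _ = 1 := h1
          · calc χ c * χ a * K.sgn b = K.sgn b * (χ c * χ a) := by ring
              _ = 1 := h1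
        · exact hpos e (mem_deleteEdge_edges.mpr ⟨he, heb⟩) u v hends
      · -- b is a bridge
        set K' := K.deleteEdge b with hK'
        set A := compAt K' a with hA
        set B := compAt K' c with hB
        have hsubA : IsSubgraph A K :=
          (compAt_sub K' a).transfer (deleteEdge_subgraph K b)
        have hsubB : IsSubgraph B K :=
          (compAt_sub K' c).transfer (deleteEdge_subgraph K b)
        have hcardA : A.edges.card < n := by
          refine lt_of_le_of_lt (Finset.card_le_card ?_) hcard'
          exact (compAt_sub K' a).2.1
        have hcardB : B.edges.card < n := by
          refine lt_of_le_of_lt (Finset.card_le_card ?_) hcard'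
          exact (compAt_sub K' c).2.1
        obtain ⟨χ₁, hχ₁, hpos₁⟩ := ih _ hcardA A rfl (compAt_connected (K := K') haV)
          (hcyc.mono hsubA)
        obtain ⟨χ₂, hχ₂, hpos₂⟩ := ih _ hcardB B rfl (compAt_connected (K := K') hcV)
          (hcyc.mono hsubB)
        set d : ℤ := χ₁ a * χ₂ c * K.sgn b with hd
        have hdu : d = 1 ∨ d = -1 := unit_mul (unit_mul (hχ₁ a) (hχ₂ c)) (K.sgn_unit b hb)
        classical
        set χ : ℕ → ℤ := fun v => if v ∈ A.verts then χ₁ v else d * χ₂ v with hχdef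
        have hχu : ∀ v, χ v = 1 ∨ χ v = -1 := by
          intro v
          by_cases hv : v ∈ A.verts
          · simp only [hχdef, if_pos hv]; exact hχ₁ v
          · simp only [hχdef, if_neg hv]; exact unit_mul hdu (hχ₂ v)
        have haA : a ∈ A.verts := mem_compAt_verts.mpr ⟨haV, .refl⟩
        have hcB : c ∈ B.verts := mem_compAt_verts.mpr ⟨hcV, .refl⟩
        have hcA : c ∉ A.verts := fun hmem => hbr (mem_compAt_verts.mp hmem).2
        refine ⟨χ, hχu, fun e he u v hends => ?_⟩
        by_cases heb : e = b
        · rw [heb]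
          rw [heb] at hends
          have huv : (u = a ∧ v = c) ∨ (u = c ∧ v = a) := by
            rw [hac, Sym2.eq_iff] at hends; tauto
          have hkey : χ a * χ c * K.sgn b = 1 := by
            simp only [hχdef, if_pos haA, if_neg hcA]
            calc χ₁ a * (χ₁ a * χ₂ c * K.sgn b * χ₂ c) * K.sgn b
                = (χ₁ a * χ₁ a) * (χ₂ c * χ₂ c) * (K.sgn b * K.sgn b) := by ring
              _ = 1 := by
                  rw [unit_sq (hχ₁ a), unit_sq (hχ₂ c), unit_sq (K.sgn_unit b hb)]; norm_num
          rcases huv with ⟨hu1, hv1⟩ | ⟨hu1, hv1⟩ <;> rw [hu1, hv1]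
          · exact hkey
          · calc χ c * χ a * K.sgn b = χ a * χ c * K.sgn b := by ring
              _ = 1 := hkey
        · have heK' : e ∈ K'.edges := mem_deleteEdge_edges.mpr ⟨he, heb⟩
          by_cases hu : u ∈ A.verts
          · have heA : e ∈ A.edges :=
              compAt_edge_of_end heK' (show u ∈ K'.ends e by rw [show K'.ends e = K.ends e from rfl, hends]; simp)
                (mem_compAt_verts.mp hu).2
            have hvA : v ∈ A.verts := A.ends_mem e heA v
              (by rw [show A.ends e = K.ends e from rfl, hends]; simp)
            have := hpos₁ e heA u v (show A.ends e = s(u, v) from hends)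
            simp only [hχdef, if_pos hu, if_pos hvA]
            exact this
          · have huK : u ∈ K.verts := K.ends_mem e he u (by rw [hends]; simp)
            have hu2 : ReflTransGen K'.Adj u c := by
              rcases reach_del_or hac (hconn.2 u huK a haV) with h1 | h1
              · exact absurd ((mem_compAt_verts (K := K')).mpr
                  ⟨show u ∈ K'.verts from huK, reach_symm h1⟩) hu
              · exact h1
            have heB : e ∈ B.edges :=
              compAt_edge_of_end heK' (show u ∈ K'.ends e by rw [show K'.ends e = K.ends e from rfl, hends]; simp)
                (reach_symm hu2)
            have hvB : v ∈ B.verts := B.ends_mem e heB v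
              (by rw [show B.ends e = K.ends e from rfl, hends]; simp)
            have hvA : v ∉ A.verts := by
              intro hmem
              exact compAt_verts_disj hbr hmem hvB
            have := hpos₂ e heB u v (show B.ends e = s(u, v) from hends)
            have this2 : χ₂ u * χ₂ v * K.sgn e = 1 := this
            simp only [hχdef, if_neg hu, if_neg hvA]
            calc d * χ₂ u * (d * χ₂ v) * K.sgn e
                = (d * d) * (χ₂ u * χ₂ v * K.sgn e) := by ring
              _ = 1 := by rw [unit_sq hdu, this2, one_mul]

theorem exists_unb_cyc {K : SignedGraph} (hconn : K.Connected) (hK : ¬ K.Balanced) :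
    ∃ x y vs es f, Walk K x y vs es ∧ vs.Nodup ∧ f ∈ K.edges ∧ f ∉ es ∧
      K.ends f = s(y, x) ∧ K.sgn f * (es.map K.sgn).prod = -1 := by
  by_contra hno
  have hcyc : AllCycPos K := by
    intro x y vs es f hw hnd hf hfes hends
    have hunit : K.sgn f * (es.map K.sgn).prod = 1 ∨
        K.sgn f * (es.map K.sgn).prod = -1 := by
      refine unit_mul (K.sgn_unit f hf) (unit_list_prod ?_)
      intro s hs
      rw [List.mem_map] at hs
      obtain ⟨e, he, rfl⟩ := hs
      exact K.sgn_unit e (hw.edges_mem e he)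
    rcases hunit with h1 | h1
    · exact h1
    · exact absurd ⟨x, y, vs, es, f, hw, hnd, hf, hfes, hends, h1⟩ hno
  obtain ⟨χ, hχ, hpos⟩ := posSwitch_of_allCycPos K.edges.card K rfl hconn hcyc
  exact hK (balanced_of_posSwitch hχ hpos)

end SignedGraph
namespace SignedGraph

open Relation Finset

lemma degree_eq_zero_of_not_mem {K : SignedGraph} {w : ℕ} (hw : w ∉ K.verts) :
    K.degree w = 0 := by
  rw [degree_eq_sum_wt]
  refine Finset.sum_eq_zero fun e he => ?_
  obtain ⟨p, q, hpq⟩ := sym2_rep (K.ends e)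
  by_cases hpqeq : p = q
  · subst hpqeq
    rw [wt_of_loop hpq, if_neg]
    rintro rfl
    exact hw (K.ends_mem e he w (by rw [hpq]; simp))
  · rw [wt_of_ne hpq hpqeq, if_neg]
    rintro (rfl | rfl)
    · exact hw (K.ends_mem e he w (by rw [hpq]; simp))
    · exact hw (K.ends_mem e he w (by rw [hpq]; simp))

lemma exists_cover_mem {G : SignedGraph} {F : Multiset SignedGraph}
    (hcover : ∀ e ∈ G.edges, 0 < coverCount F e) {b : ℕ} (hb : b ∈ G.edges) :
    ∃ S ∈ F, b ∈ S.edges := by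
  have h1 := hcover b hb
  unfold coverCount at h1
  rw [Multiset.card_pos] at h1
  obtain ⟨S, hS⟩ := Multiset.exists_mem_of_ne_zero h1
  rw [Multiset.mem_filter] at hS
  exact ⟨S, hS.1, hS.2⟩

theorem forward_negativeness {G : SignedGraph} (hcov : G.Coverable) :
    G.negativeness ≠ 1 := by
  intro hneg
  obtain ⟨Hm, hseq, hcount⟩ := exists_min_sequiv G
  rw [hneg] at hcount
  obtain ⟨f, hfeq⟩ := Finset.card_eq_one.mp hcount
  have hf_mem : f ∈ Hm.edges ∧ Hm.sgn f = -1 :=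
    Finset.mem_filter.mp (hfeq ▸ Finset.mem_singleton_self f)
  have hedges : G.edges = Hm.edges := hseq.2.1
  have hfG : f ∈ G.edges := hedges ▸ hf_mem.1
  obtain ⟨F, hF, hcover⟩ := hcov
  obtain ⟨S, hSF, hSf⟩ := exists_cover_mem hcover hfG
  obtain ⟨hSsub, hScirc⟩ := hF S hSF
  have hprod_val : ∀ C : SignedGraph, IsSubgraph C G →
      (∏ e ∈ C.edges, Hm.sgn e) = if f ∈ C.edges then -1 else 1 := by
    intro C hsub
    have hsgn1 : ∀ e ∈ C.edges, e ≠ f → Hm.sgn e = 1 := by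
      intro e he hef
      have heHm : e ∈ Hm.edges := hedges ▸ hsub.2.1 he
      rcases Hm.sgn_unit e heHm with h | h
      · exact h
      · exfalso
        have : e ∈ Hm.edges.filter fun e => Hm.sgn e = -1 := Finset.mem_filter.mpr ⟨heHm, h⟩
        rw [hfeq, Finset.mem_singleton] at this
        exact hef this
    by_cases hfC : f ∈ C.edges
    · rw [if_pos hfC]
      rw [Finset.prod_eq_single f (fun e he hef => hsgn1 e he hef) (fun h => absurd hfC h)]
      exact hf_mem.2
    · rw [if_neg hfC]
      exact Finset.prod_eq_one fun e he => hsgn1 e he (fun hh => hfC (hh ▸ he))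
  rcases hScirc with ⟨hCirc, hBal⟩ | hBarb
  · have h1 : S.sgnOf = 1 := (negEdgeCount_even_iff_sgnOf S).mp hBal
    have h2 := prod_sgn_sequiv hseq hSsub (circuit_even_deg hCirc)
    rw [hprod_val S hSsub, if_pos hSf, h1] at h2
    norm_num at h2
  · obtain ⟨x, y, P, C₁, C₂, hP, hC₁, hC₂, hU3, hv1, hv2, hv3, he1, he2, he3⟩ := hBarb
    have hsub1 : IsSubgraph C₁ G := (hU3.2.1).transfer hSsub
    have hsub2 : IsSubgraph C₂ G := (hU3.2.2.1).transfer hSsub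
    have hmemf : ∀ (C : SignedGraph), IsSubgraph C G → IsUnbalancedCircuit C →
        f ∈ C.edges := by
      intro C hsub hCU
      have hs1 : C.sgnOf = -1 := (negEdgeCount_odd_iff_sgnOf C).mp hCU.2
      have h2 := prod_sgn_sequiv hseq hsub (circuit_even_deg hCU.1)
      by_contra hfC
      rw [hprod_val C hsub, if_neg hfC, hs1] at h2
      norm_num at h2
    have hf1 := hmemf C₁ hsub1 hC₁
    have hf2 := hmemf C₂ hsub2 hC₂
    have : f ∈ C₁.edges ∩ C₂.edges := Finset.mem_inter.mpr ⟨hf1, hf2⟩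
    rw [he3] at this
    exact absurd this (Finset.notMem_empty f)

theorem forward_cut {G : SignedGraph} (hconn : G.Connected) (hcov : G.Coverable) :
    ¬ ∃ b, G.IsCutEdge b ∧ ∃ H, IsComponent (G.deleteEdge b) H ∧ H.Balanced := by
  rintro ⟨b, ⟨hbG, u, v, hbe, hbreach⟩, Hc, hHcomp, hHbal⟩
  have huv : u ≠ v := by rintro rfl; exact hbreach .refl
  have huG : u ∈ G.verts := G.ends_mem b hbG u (by rw [hbe]; simp)
  have hvG : v ∈ G.verts := G.ends_mem b hbG v (by rw [hbe]; simp)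
  obtain ⟨F, hF, hcover⟩ := hcov
  obtain ⟨S, hSF, hSb⟩ := exists_cover_mem hcover hbG
  obtain ⟨hSsub, hScirc⟩ := hF S hSF
  rcases hScirc with ⟨hCirc, _⟩ | hBarb
  · exact hbreach (even_subgraph_no_bridge hSsub hCirc.2.2 hSb hbe huv)
  · obtain ⟨x, y, P, C₁, C₂, hP, hC₁, hC₂, hU3, hv1, hv2, hv3, he1, he2, he3⟩ := hBarb
    have hnotin : ∀ (C : SignedGraph), IsSubgraph C S → IsUnbalancedCircuit C →
        b ∉ C.edges := by
      intro C hCS hCU hmem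
      exact hbreach (even_subgraph_no_bridge (hCS.transfer hSsub) hCU.1.2.2 hmem hbe huv)
    have hbP : b ∈ P.edges := by
      have hbS : b ∈ P.edges ∪ C₁.edges ∪ C₂.edges := hU3.2.2.2.2 ▸ hSb
      rcases Finset.mem_union.mp hbS with hh | hh
      · rcases Finset.mem_union.mp hh with hh2 | hh2
        · exact hh2
        · exact absurd hh2 (hnotin C₁ hU3.2.1 hC₁)
      · exact absurd hh (hnotin C₂ hU3.2.2.1 hC₂)
    have hsubP : IsSubgraph P G := hU3.1.transfer hSsub
    have hPends : P.ends b = s(u, v) := (hsubP.2.2 b hbP).1.trans hbe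
    rcases hP with ⟨_, _, hPe⟩ | ⟨hxy, hPconn, hxP, hyP, hdx, hdy, hdint⟩
    · rw [hPe] at hbP; exact absurd hbP (Finset.notMem_empty b)
    have hxC₁ : x ∈ C₁.verts := by
      have : x ∈ P.verts ∩ C₁.verts := hv1 ▸ Finset.mem_singleton_self x
      exact (Finset.mem_inter.mp this).2
    have hyC₂ : y ∈ C₂.verts := by
      have : y ∈ P.verts ∩ C₂.verts := hv2 ▸ Finset.mem_singleton_self y
      exact (Finset.mem_inter.mp this).2
    have finish : ∀ (C : SignedGraph) (z : ℕ), IsSubgraph C S → IsUnbalancedCircuit C →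
        z ∈ C.verts → z ∈ Hc.verts → False := by
      intro C z hCS hCU hzC hzH
      have hsubCG : IsSubgraph C G := hCS.transfer hSsub
      have hCK : IsSubgraph C (G.deleteEdge b) :=
        subgraph_deleteEdge_of_not_mem hsubCG (hnotin C hCS hCU)
      have hCH : IsSubgraph C Hc := subgraph_of_component hHcomp hCK hCU.1.1 hzC hzH
      have h1 : C.sgnOf = 1 := sgnOf_circuit_of_balanced hHbal hCH (circuit_even_deg hCU.1)
      have h2 : C.sgnOf = -1 := (negEdgeCount_odd_iff_sgnOf C).mp hCU.2
      rw [h1] at h2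
      norm_num at h2
    have claim : ∀ uu vv : ℕ, G.ends b = s(uu, vv) →
        ¬ ReflTransGen (G.deleteEdge b).Adj uu vv → uu ∈ Hc.verts → False := by
      intro uu vv hbe' hnr huuH
      have huuvv : uu ≠ vv := by rintro rfl; exact hnr .refl
      have hPends' : P.ends b = s(uu, vv) := (hsubP.2.2 b hbP).1.trans hbe'
      have huuP : uu ∈ P.verts := P.ends_mem b hbP uu (by rw [hPends']; simp)
      have hvvP : vv ∈ P.verts := P.ends_mem b hbP vv (by rw [hPends']; simp)
      have hstep : ReflTransGen (G.deleteEdge b).Adj uu x ∨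
          ReflTransGen (G.deleteEdge b).Adj uu y := by
        by_cases hux : uu = x
        · exact Or.inl (hux ▸ .refl)
        by_cases huy : uu = y
        · exact Or.inr (huy ▸ .refl)
        have hdeg_uu : (P.deleteEdge b).degree uu = 1 := by
          have h1 : P.degree uu = (P.deleteEdge b).degree uu + P.wt uu b :=
            degree_deleteEdge hbP uu
          have h2 : P.wt uu b = 1 := by rw [wt_of_ne hPends' huuvv]; simp
          have h3 : P.degree uu = 2 := hdint uu huuP hux huy
          omega
        obtain ⟨w, hwne, hwodd, hwreach⟩ := exists_odd_companion (P.deleteEdge b) uu huuP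
          (by rw [hdeg_uu]; exact ⟨0, rfl⟩)
        have hwreachG : ReflTransGen (G.deleteEdge b).Adj uu w :=
          reach_mono (hsubP.deleteEdge_mono b) hwreach
        by_cases hwvv : w = vv
        · exact absurd (hwvv ▸ hwreachG) hnr
        have hwP : w ∈ P.verts := by
          by_contra hwP
          have : (P.deleteEdge b).degree w = 0 :=
            degree_eq_zero_of_not_mem (K := P.deleteEdge b) hwP
          rw [this] at hwodd
          exact absurd hwodd (by decide)
        have h1 : P.degree w = (P.deleteEdge b).degree w + P.wt w b := degree_deleteEdge hbP w
        have h2 : P.wt w b = 0 := by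
          rw [wt_of_ne hPends' huuvv, if_neg (not_or.mpr ⟨hwne, hwvv⟩)]
        by_cases hwx : w = x
        · exact Or.inl (hwx ▸ hwreachG)
        by_cases hwy : w = y
        · exact Or.inr (hwy ▸ hwreachG)
        have h3 : P.degree w = 2 := hdint w hwP hwx hwy
        rw [Nat.odd_iff] at hwodd
        omega
      rcases hstep with h | h
      · exact finish C₁ x hU3.2.1 hC₁ hxC₁ (component_reach_closed hHcomp huuH h)
      · exact finish C₂ y hU3.2.2.1 hC₂ hyC₂ (component_reach_closed hHcomp huuH h)
    obtain ⟨h0, hh0⟩ := hHcomp.2.1.1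
    have h0G : h0 ∈ G.verts := hHcomp.1.1 hh0
    rcases reach_del_or hbe (hconn.2 h0 h0G u huG) with h1 | h1
    · exact claim u v hbe hbreach (component_reach_closed hHcomp hh0 h1)
    · exact claim v u (hbe.trans Sym2.eq_swap)
        (fun hh => hbreach (reach_symm hh)) (component_reach_closed hHcomp hh0 h1)

end SignedGraph
namespace SignedGraph

open Relation Finset

/-! ### More walk utilities -/

theorem Walk.split_first' {G : SignedGraph} {x y : ℕ} {vs es : List ℕ}
    (h : Walk G x y vs es) (S : Finset ℕ) (hhit : ∃ w ∈ vs, w ∈ S) :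
    ∃ z p q p' q', Walk G x z p q ∧ Walk G z y p' q' ∧ vs = p ++ p'.tail ∧ es = q ++ q' ∧
      z ∈ S ∧ (∀ w ∈ p, w ∈ S → w = z) ∧ p' <:+ vs := by
  induction h with
  | nil v hv =>
    obtain ⟨w, hw, hwS⟩ := hhit
    rw [List.mem_singleton] at hw
    subst hw
    exact ⟨w, [w], [], [w], [], Walk.nil w hv, Walk.nil w hv, by simp, by simp, hwS,
      by simp +contextual, List.suffix_refl _⟩
  | @cons v _ vs' es' u e he hd h ih =>
    by_cases hu : u ∈ S
    · refine ⟨u, [u], [], u :: vs', e :: es',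
        Walk.nil u (G.ends_mem e he u (by rw [hd]; simp)),
        Walk.cons u e he hd h, by simp, by simp, hu, by simp +contextual,
        List.suffix_refl _⟩
    · have hhit' : ∃ w ∈ vs', w ∈ S := by
        obtain ⟨w, hw, hwS⟩ := hhit
        rcases List.mem_cons.mp hw with rfl | hw
        · exact absurd hwS hu
        · exact ⟨w, hw, hwS⟩
      obtain ⟨z, p, q, p', q', hw1, hw2, hveq, heeq, hzS, honly, hsuf⟩ := ih hhit'
      obtain ⟨t, rfl⟩ := hw1.head_cons
      refine ⟨z, u :: v :: t, e :: q, p', q', Walk.cons u e he hd hw1, hw2, ?_, ?_, hzS, ?_, ?_⟩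
      · rw [List.cons_append, ← hveq]
      · rw [List.cons_append, ← heeq]
      · intro w hw hwS
        rcases List.mem_cons.mp hw with rfl | hw
        · exact absurd hwS hu
        · exact honly w hw hwS
      · exact hsuf.trans (List.suffix_cons _ _)

theorem Walk.reach_from_start {G : SignedGraph} {x y : ℕ} {vs es : List ℕ}
    (h : Walk G x y vs es) {w : ℕ} (hw : w ∈ vs) : ReflTransGen G.Adj x w := by
  obtain ⟨_, _, hw2, _, _⟩ := h.reverse.suffix_from (by rw [List.mem_reverse]; exact hw)
  exact reach_symm hw2.reach

/-- Trim a reachability to a walk hitting a target set exactly once, at its end. -/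
lemma reach_to_set {K : SignedGraph} {a t : ℕ} {T : Finset ℕ} (ht : t ∈ T)
    (htV : t ∈ K.verts) (hr : ReflTransGen K.Adj a t) :
    ∃ z ps qs, Walk K a z ps qs ∧ ps.Nodup ∧ z ∈ T ∧
      ∀ w ∈ ps, w ∈ T → w = z := by
  obtain ⟨vs0, es0, hw0⟩ := Walk.of_reach htV hr
  obtain ⟨z, p, q, _, _, hw1, _, _, _, hzT, honly, _⟩ := hw0.split_first T ht
  obtain ⟨ps, qs, hw2, hnd, hvm, _⟩ := hw1.dedup
  exact ⟨z, ps, qs, hw2, hnd, hzT, fun w hw hwT => honly w (hvm w hw) hwT⟩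

/-! ### Negativeness and balance helpers -/

lemma negativeness_le_one_of_posSwitch_delete {G : SignedGraph} {e : ℕ} {χ : ℕ → ℤ}
    (hχ : ∀ v, χ v = 1 ∨ χ v = -1) (hpos : PosSwitch χ (G.deleteEdge e)) :
    G.negativeness ≤ 1 := by
  refine le_trans (negativeness_le (switchG_sequiv G χ hχ)) ?_
  unfold negEdgeCount
  have hsubset : (switchG G χ hχ).edges.filter
      (fun f => (switchG G χ hχ).sgn f = -1) ⊆ {e} := by
    intro f hf
    obtain ⟨hfe, hfneg⟩ := Finset.mem_filter.mp hf
    rw [Finset.mem_singleton]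
    by_contra hfe2
    have hfK : f ∈ (G.deleteEdge e).edges := mem_deleteEdge_edges.mpr ⟨hfe, hfe2⟩
    obtain ⟨a, b, hab⟩ := sym2_rep (G.ends f)
    have h1 : χ a * χ b * G.sgn f = 1 := hpos f hfK a b hab
    have h2 : (switchG G χ hχ).sgn f = χ a * χ b * G.sgn f := by
      show mulFn χ (G.ends f) * G.sgn f = _
      rw [hab, mulFn_mk]
    rw [h2, h1] at hfneg
    norm_num at hfneg
  calc ((switchG G χ hχ).edges.filter _).card ≤ ({e} : Finset ℕ).card :=
        Finset.card_le_card hsubset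
    _ = 1 := Finset.card_singleton e

lemma balanced_of_negativeness {G : SignedGraph} (h1 : G.negativeness ≤ 1)
    (h2 : G.negativeness ≠ 1) : G.Balanced :=
  balanced_of_negativeness_eq_zero (by omega)

lemma cyc_pos_of_balanced {G : SignedGraph} (hbal : G.Balanced) {x y f : ℕ}
    {vs es : List ℕ} (hw : Walk G x y vs es) (hf : f ∈ G.edges)
    (hends : G.ends f = s(y, x)) : G.sgn f * (es.map G.sgn).prod = 1 := by
  obtain ⟨χ, hχ, hpos⟩ := posSwitch_of_balanced hbal
  rw [Walk.sgn_prod hχ hpos hw, hpos.sgn_eq hχ hf hends]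
  calc χ y * χ x * (χ x * χ y) = (χ x * χ x) * (χ y * χ y) := by ring
    _ = 1 := by rw [unit_sq (hχ x), unit_sq (hχ y)]; norm_num

lemma cycGraph_unbalanced {G : SignedGraph} {x y f : ℕ} {vs es : List ℕ}
    (h : Walk G x y vs es) (hnd : vs.Nodup) (hf : f ∈ G.edges) (hd : G.ends f = s(y, x))
    (hfes : f ∉ es) (hsgn : G.sgn f * (es.map G.sgn).prod = -1) :
    IsUnbalancedCircuit (cycGraph G h f hf hd) :=
  ⟨cycGraph_isCircuit h hnd hf hd hfes, (negEdgeCount_odd_iff_sgnOf _).mpr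
    (by rw [cycGraph_sgnOf h hnd hf hd hfes]; exact hsgn)⟩

lemma cycGraph_balanced {G : SignedGraph} {x y f : ℕ} {vs es : List ℕ}
    (h : Walk G x y vs es) (hnd : vs.Nodup) (hf : f ∈ G.edges) (hd : G.ends f = s(y, x))
    (hfes : f ∉ es) (hsgn : G.sgn f * (es.map G.sgn).prod = 1) :
    IsBalancedCircuit (cycGraph G h f hf hd) :=
  ⟨cycGraph_isCircuit h hnd hf hd hfes, (negEdgeCount_even_iff_sgnOf _).mpr
    (by rw [cycGraph_sgnOf h hnd hf hd hfes]; exact hsgn)⟩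

lemma exists_unb_cyc_in {K G : SignedGraph} (hsub : IsSubgraph K G) (hconn : K.Connected)
    (hK : ¬ K.Balanced) :
    ∃ x y vs es f, Walk G x y vs es ∧ vs.Nodup ∧ f ∈ G.edges ∧ f ∉ es ∧
      G.ends f = s(y, x) ∧ G.sgn f * (es.map G.sgn).prod = -1 ∧
      (∀ v ∈ vs, v ∈ K.verts) ∧ (∀ e ∈ es, e ∈ K.edges) ∧ f ∈ K.edges := by
  obtain ⟨x, y, vs, es, f, hw, hnd, hf, hfes, hends, hsgn⟩ := exists_unb_cyc hconn hK
  refine ⟨x, y, vs, es, f, hw.of_subgraph hsub, hnd, hsub.2.1 hf, hfes,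
    ((hsub.2.2 f hf).1).symm.trans hends, ?_, hw.verts_mem, hw.edges_mem, hf⟩
  have hmap : es.map G.sgn = es.map K.sgn :=
    List.map_congr_left fun e he => ((hsub.2.2 e (hw.edges_mem e he)).2).symm
  rw [hmap, ← (hsub.2.2 f hf).2]
  exact hsgn

/-! ### Barbell builders -/

lemma barbell_trivial {G D₁ D₂ : SignedGraph} {z : ℕ} (h1 : IsSubgraph D₁ G)
    (h2 : IsSubgraph D₂ G) (hU1 : IsUnbalancedCircuit D₁) (hU2 : IsUnbalancedCircuit D₂)
    (hv : D₁.verts ∩ D₂.verts = {z}) (hedge : D₁.edges ∩ D₂.edges = ∅) :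
    ∃ S, IsSubgraph S G ∧ IsBarbell S ∧ D₁.edges ⊆ S.edges := by
  have hz1 : z ∈ D₁.verts :=
    (Finset.mem_inter.mp (hv ▸ Finset.mem_singleton_self z)).1
  have hz2 : z ∈ D₂.verts :=
    (Finset.mem_inter.mp (hv ▸ Finset.mem_singleton_self z)).2
  have hzG : z ∈ G.verts := h1.1 hz1
  refine ⟨un3 G (trivGraph G z) D₁ D₂ (trivGraph_sub hzG) h1 h2,
    un3_sub (trivGraph_sub hzG) h1 h2,
    ⟨z, z, trivGraph G z, D₁, D₂, trivGraph_isPath z, hU1, hU2,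
      un3_isUnion3 (trivGraph_sub hzG) h1 h2, ?_, ?_, ?_, ?_, ?_, hedge⟩, ?_⟩
  · show {z} ∩ D₁.verts = {z}
    exact Finset.singleton_inter_of_mem hz1
  · show {z} ∩ D₂.verts = {z}
    exact Finset.singleton_inter_of_mem hz2
  · rw [hv]; simp
  · show (∅ : Finset ℕ) ∩ D₁.edges = ∅
    exact Finset.empty_inter _
  · show (∅ : Finset ℕ) ∩ D₂.edges = ∅
    exact Finset.empty_inter _
  · intro g hg
    show g ∈ (∅ : Finset ℕ) ∪ D₁.edges ∪ D₂.edges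
    exact Finset.mem_union_left _ (Finset.mem_union_right _ hg)

lemma barbell_path {G D₁ D₂ : SignedGraph} {z₁ z₂ : ℕ} {ps qs : List ℕ}
    (hw : Walk G z₁ z₂ ps qs) (hnd : ps.Nodup)
    (h1 : IsSubgraph D₁ G) (h2 : IsSubgraph D₂ G)
    (hU1 : IsUnbalancedCircuit D₁) (hU2 : IsUnbalancedCircuit D₂)
    (hvv : D₁.verts ∩ D₂.verts = ∅)
    (hv1 : ∀ w ∈ ps, w ∈ D₁.verts → w = z₁) (hz1 : z₁ ∈ D₁.verts)
    (hv2 : ∀ w ∈ ps, w ∈ D₂.verts → w = z₂) (hz2 : z₂ ∈ D₂.verts) :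
    ∃ S, IsSubgraph S G ∧ IsBarbell S ∧
      qs.toFinset ∪ D₁.edges ∪ D₂.edges ⊆ S.edges := by
  have hne : z₁ ≠ z₂ := by
    rintro rfl
    have : z₁ ∈ D₁.verts ∩ D₂.verts := Finset.mem_inter.mpr ⟨hz1, hz2⟩
    rw [hvv] at this
    exact absurd this (Finset.notMem_empty z₁)
  set P := walkGraph G hw with hP
  have hPsub : IsSubgraph P G := walkGraph_sub hw
  have hPpath : IsPath P z₁ z₂ := walkGraph_isPath hw hnd hne
  have hedge1 : P.edges ∩ D₁.edges = ∅ := by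
    rw [Finset.eq_empty_iff_forall_notMem]
    intro g hg
    obtain ⟨hgP, hgD⟩ := Finset.mem_inter.mp hg
    obtain ⟨a, b, hab, haP, hbP, hab2⟩ := hw.consecutive hnd g (List.mem_toFinset.mp hgP)
    have haD : a ∈ D₁.verts := D₁.ends_mem g hgD a (by rw [(h1.2.2 g hgD).1, hab]; simp)
    have hbD : b ∈ D₁.verts := D₁.ends_mem g hgD b (by rw [(h1.2.2 g hgD).1, hab]; simp)
    exact hab2 ((hv1 a haP haD).trans (hv1 b hbP hbD).symm)
  have hedge2 : P.edges ∩ D₂.edges = ∅ := by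
    rw [Finset.eq_empty_iff_forall_notMem]
    intro g hg
    obtain ⟨hgP, hgD⟩ := Finset.mem_inter.mp hg
    obtain ⟨a, b, hab, haP, hbP, hab2⟩ := hw.consecutive hnd g (List.mem_toFinset.mp hgP)
    have haD : a ∈ D₂.verts := D₂.ends_mem g hgD a (by rw [(h2.2.2 g hgD).1, hab]; simp)
    have hbD : b ∈ D₂.verts := D₂.ends_mem g hgD b (by rw [(h2.2.2 g hgD).1, hab]; simp)
    exact hab2 ((hv2 a haP haD).trans (hv2 b hbP hbD).symm)
  have hedge3 : D₁.edges ∩ D₂.edges = ∅ := by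
    rw [Finset.eq_empty_iff_forall_notMem]
    intro g hg
    obtain ⟨hg1, hg2⟩ := Finset.mem_inter.mp hg
    obtain ⟨a, b, hab⟩ := sym2_rep (D₁.ends g)
    have ha1 : a ∈ D₁.verts := D₁.ends_mem g hg1 a (by rw [hab]; simp)
    have ha2 : a ∈ D₂.verts := D₂.ends_mem g hg2 a
      (by rw [(h2.2.2 g hg2).1, ← (h1.2.2 g hg1).1, hab]; simp)
    have : a ∈ D₁.verts ∩ D₂.verts := Finset.mem_inter.mpr ⟨ha1, ha2⟩
    rw [hvv] at this
    exact absurd this (Finset.notMem_empty a)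
  refine ⟨un3 G P D₁ D₂ hPsub h1 h2, un3_sub hPsub h1 h2,
    ⟨z₁, z₂, P, D₁, D₂, hPpath, hU1, hU2, un3_isUnion3 hPsub h1 h2, ?_, ?_, ?_,
      hedge1, hedge2, hedge3⟩, ?_⟩
  · apply Finset.ext
    intro w
    constructor
    · intro hw2
      obtain ⟨hwP, hwD⟩ := Finset.mem_inter.mp hw2
      rw [Finset.mem_singleton]
      exact hv1 w (List.mem_toFinset.mp hwP) hwD
    · intro hw2
      rw [Finset.mem_singleton] at hw2
      subst hw2
      exact Finset.mem_inter.mpr ⟨List.mem_toFinset.mpr hw.start_mem, hz1⟩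
  · apply Finset.ext
    intro w
    constructor
    · intro hw2
      obtain ⟨hwP, hwD⟩ := Finset.mem_inter.mp hw2
      rw [Finset.mem_singleton]
      exact hv2 w (List.mem_toFinset.mp hwP) hwD
    · intro hw2
      rw [Finset.mem_singleton] at hw2
      subst hw2
      exact Finset.mem_inter.mpr ⟨List.mem_toFinset.mpr hw.end_mem, hz2⟩
  · rw [hvv]
    rw [Finset.singleton_inter_of_notMem (by simp [hne])]
  · intro g hg
    show g ∈ P.edges ∪ D₁.edges ∪ D₂.edges
    rcases Finset.mem_union.mp hg with hg' | hg'
    · rcases Finset.mem_union.mp hg' with h | h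
      · exact Finset.mem_union_left _ (Finset.mem_union_left _ h)
      · exact Finset.mem_union_left _ (Finset.mem_union_right _ h)
    · exact Finset.mem_union_right _ hg'

end SignedGraph
namespace SignedGraph

open Relation Finset

lemma suffix_whole_of_head_mem {h : ℕ} {t s : List ℕ} (hnd : (h :: t).Nodup)
    (hs : s <:+ (h :: t)) (hh : h ∈ s) : s = h :: t := by
  obtain ⟨pre, hpre⟩ := hs
  cases pre with
  | nil => simpa using hpre
  | cons p ps =>
    rw [List.cons_append, List.cons.injEq] at hpre
    obtain ⟨rfl, hpre2⟩ := hpre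
    exfalso
    rw [List.nodup_cons] at hnd
    exact hnd.1 (hpre2 ▸ List.mem_append_right ps hh)

/-- Split a cycle (walk plus closing edge) at two of its vertices into two arcs. -/
lemma cyc_split {K : SignedGraph} {xd yd : ℕ} {ws fs : List ℕ}
    (hw : Walk K xd yd ws fs) (hnd : ws.Nodup)
    {fD : ℕ} (hfD : fD ∈ K.edges) (hdD : K.ends fD = s(yd, xd))
    {a b : ℕ} (ha : a ∈ ws) (hb : b ∈ ws) (hab : a ≠ b) :
    ∃ vs₁ es₁ vs₂ es₂, Walk K a b vs₁ es₁ ∧ Walk K b a vs₂ es₂ ∧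
      vs₁.Nodup ∧ vs₂.Nodup ∧
      (∀ w, w ∈ vs₁ → w ∈ vs₂ → w = a ∨ w = b) ∧
      (∀ w ∈ vs₁, w ∈ ws) ∧ (∀ w ∈ vs₂, w ∈ ws) ∧
      (∀ g ∈ es₁, g ∈ fD :: fs) ∧ (∀ g ∈ es₂, g ∈ fD :: fs) ∧
      (es₁.map K.sgn).prod * (es₂.map K.sgn).prod =
        K.sgn fD * (fs.map K.sgn).prod := by
  have hxdV : xd ∈ K.verts := hw.verts_mem xd hw.start_mem
  obtain ⟨z, α, qα, α', qα', hwα, hwα', hveq, heeq, hz, _, hsufα'⟩ :=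
    hw.split_first' {a} ⟨a, ha, Finset.mem_singleton_self a⟩
  rw [Finset.mem_singleton] at hz
  subst hz
  have hndα' : α'.Nodup := hnd.sublist hsufα'.sublist
  have hndα : α.Nodup := (hveq ▸ hnd).sublist (List.sublist_append_left α _)
  have hdisj : α.Disjoint α'.tail := (List.nodup_append'.mp (hveq ▸ hnd)).2.2
  obtain ⟨tα', hα'c⟩ := hwα'.head_cons
  have hαα' : ∀ w, w ∈ α → w ∈ α' → w = z := by
    intro w hwa hwa'
    rw [hα'c, List.mem_cons] at hwa'
    rcases hwa' with rfl | hw2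
    · rfl
    · exact absurd (show w ∈ α'.tail by rw [hα'c]; exact hw2) (hdisj hwa)
  have hαsub : ∀ w ∈ α, w ∈ ws := fun w hw2 => hveq ▸ List.mem_append_left _ hw2
  have hα'sub : ∀ w ∈ α', w ∈ ws := fun w hw2 => hsufα'.subset hw2
  by_cases hbα' : b ∈ α'
  · -- b lies on the walk from z to yd
    obtain ⟨z2, m₁, n₁, m₂, n₂, hwm₁, hwm₂, hveq2, heeq2, hz2, _, hsufm₂⟩ :=
      hwα'.split_first' {b} ⟨b, hbα', Finset.mem_singleton_self b⟩
    rw [Finset.mem_singleton] at hz2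
    subst hz2
    have hndm₁ : m₁.Nodup := hndα'.sublist (hveq2 ▸ List.sublist_append_left m₁ _)
    have hndm₂ : m₂.Nodup := hndα'.sublist hsufm₂.sublist
    have hm₁sub : ∀ w ∈ m₁, w ∈ α' := fun w hw2 => hveq2 ▸ List.mem_append_left _ hw2
    have ham₂ : z ∉ m₂ := by
      intro hmem
      have := suffix_whole_of_head_mem (hα'c ▸ hndα') (hα'c ▸ hsufm₂) hmem
      obtain ⟨t2, ht2⟩ := hwm₂.head_cons
      rw [ht2] at this
      rw [List.cons.injEq] at this
      exact hab this.1.symm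
    have hm₂α : m₂.Disjoint α := by
      intro w hw1 hw2
      have hwα' : w ∈ α' := hsufm₂.subset hw1
      have := hαα' w hw2 hwα'
      subst this
      exact ham₂ hw1
    have hWsnoc : Walk K z2 xd (m₂ ++ [xd]) (n₂ ++ [fD]) := hwm₂.snoc fD hfD hdD hxdV
    have hW₂ : Walk K z2 z ((m₂ ++ [xd]) ++ α.tail) ((n₂ ++ [fD]) ++ qα) := hWsnoc.join hwα
    obtain ⟨tα, hαc⟩ := hwα.head_cons
    have hlist : (m₂ ++ [xd]) ++ α.tail = m₂ ++ α := by
      rw [List.append_assoc]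
      congr 1
      rw [hαc]
      rfl
    rw [hlist] at hW₂
    have hdisj12 : m₁.Disjoint m₂.tail := (List.nodup_append'.mp (hveq2 ▸ hndα')).2.2
    obtain ⟨tm₂, hm₂c⟩ := hwm₂.head_cons
    refine ⟨m₁, n₁, m₂ ++ α, (n₂ ++ [fD]) ++ qα, hwm₁, hW₂, hndm₁, ?_, ?_, ?_, ?_, ?_, ?_, ?_⟩
    · refine List.Nodup.append hndm₂ hndα ?_
      exact hm₂α
    · intro w hw1 hw2
      rcases List.mem_append.mp hw2 with hw2 | hw2
      · right
        rw [hm₂c, List.mem_cons] at hw2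
        rcases hw2 with rfl | hw2
        · rfl
        · exact absurd hw2 (fun hh => hdisj12 hw1 (by rw [hm₂c]; exact hh))
      · left
        exact hαα' w hw2 (hm₁sub w hw1)
    · exact fun w hw2 => hα'sub w (hm₁sub w hw2)
    · intro w hw2
      rcases List.mem_append.mp hw2 with hw2 | hw2
      · exact hα'sub w (hsufm₂.subset hw2)
      · exact hαsub w hw2
    · intro g hg
      have : g ∈ qα' := heeq2 ▸ List.mem_append_left _ hg
      exact List.mem_cons_of_mem _ (heeq ▸ List.mem_append_right _ this)
    · intro g hg
      rcases List.mem_append.mp hg with hg | hg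
      · rcases List.mem_append.mp hg with hg | hg
        · have : g ∈ qα' := heeq2 ▸ List.mem_append_right _ hg
          exact List.mem_cons_of_mem _ (heeq ▸ List.mem_append_right _ this)
        · rw [List.mem_singleton] at hg
          exact hg ▸ List.mem_cons_self
      · exact List.mem_cons_of_mem _ (heeq ▸ List.mem_append_left _ hg)
    · rw [heeq, heeq2]
      simp only [List.map_append, List.prod_append, List.map_cons, List.prod_cons,
        List.map_nil, List.prod_nil]
      ring
  · -- b lies on the walk from xd to z
    have hbα : b ∈ α := by
      rcases List.mem_append.mp (hveq ▸ hb) with h | h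
      · exact h
      · exact absurd (List.mem_of_mem_tail h) hbα'
    obtain ⟨z2, β₁, r₁, β₂, r₂, hwβ₁, hwβ₂, hveq2, heeq2, hz2, _, hsufβ₂⟩ :=
      hwα.split_first' {b} ⟨b, hbα, Finset.mem_singleton_self b⟩
    rw [Finset.mem_singleton] at hz2
    subst hz2
    have hndβ₁ : β₁.Nodup := hndα.sublist (hveq2 ▸ List.sublist_append_left β₁ _)
    have hndβ₂ : β₂.Nodup := hndα.sublist hsufβ₂.sublist
    have hβ₁sub : ∀ w ∈ β₁, w ∈ α := fun w hw2 => hveq2 ▸ List.mem_append_left _ hw2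
    have hβ₂sub : ∀ w ∈ β₂, w ∈ α := fun w hw2 => hsufβ₂.subset hw2
    obtain ⟨tβ₂, hβ₂c⟩ := hwβ₂.head_cons
    have hdisjβ : β₁.Disjoint β₂.tail := (List.nodup_append'.mp (hveq2 ▸ hndα)).2.2
    have hzβ₂ : z ∈ β₂ := hwβ₂.end_mem
    have hzβ₁ : z ∉ β₁ := by
      intro hmem
      have hz2 : z ∈ β₂.tail := by
        rw [hβ₂c]
        rw [hβ₂c, List.mem_cons] at hzβ₂
        rcases hzβ₂ with h | h
        · exact absurd h.symm (fun hh => hab hh.symm)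
        · exact h
      exact hdisjβ hmem hz2
    have hWsnoc : Walk K z xd (α' ++ [xd]) (qα' ++ [fD]) := hwα'.snoc fD hfD hdD hxdV
    have hW₁ : Walk K z z2 ((α' ++ [xd]) ++ β₁.tail) ((qα' ++ [fD]) ++ r₁) := hWsnoc.join hwβ₁
    obtain ⟨tβ₁, hβ₁c⟩ := hwβ₁.head_cons
    have hlist : (α' ++ [xd]) ++ β₁.tail = α' ++ β₁ := by
      rw [List.append_assoc]
      congr 1
      rw [hβ₁c]
      rfl
    rw [hlist] at hW₁
    have hα'β₁ : α'.Disjoint β₁ := by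
      intro w hw1 hw2
      have := hαα' w (hβ₁sub w hw2) hw1
      subst this
      exact hzβ₁ hw2
    refine ⟨α' ++ β₁, (qα' ++ [fD]) ++ r₁, β₂, r₂, hW₁, hwβ₂, ?_, hndβ₂, ?_, ?_, ?_, ?_, ?_, ?_⟩
    · exact List.Nodup.append hndα' hndβ₁ hα'β₁
    · intro w hw1 hw2
      rcases List.mem_append.mp hw1 with hw1 | hw1
      · left
        exact hαα' w (hβ₂sub w hw2) hw1
      · right
        rw [hβ₂c, List.mem_cons] at hw2
        rcases hw2 with rfl | hw2
        · rfl
        · exact absurd hw2 (fun hh => hdisjβ hw1 (by rw [hβ₂c]; exact hh))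
    · intro w hw2
      rcases List.mem_append.mp hw2 with h | h
      · exact hα'sub w h
      · exact hαsub w (hβ₁sub w h)
    · exact fun w hw2 => hαsub w (hβ₂sub w hw2)
    · intro g hg
      rcases List.mem_append.mp hg with hg | hg
      · rcases List.mem_append.mp hg with hg | hg
        · exact List.mem_cons_of_mem _ (heeq ▸ List.mem_append_right _ hg)
        · rw [List.mem_singleton] at hg
          exact hg ▸ List.mem_cons_self
      · have : g ∈ qα := heeq2 ▸ List.mem_append_left _ hg
        exact List.mem_cons_of_mem _ (heeq ▸ List.mem_append_left _ this)
    · intro g hg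
      have : g ∈ qα := heeq2 ▸ List.mem_append_right _ hg
      exact List.mem_cons_of_mem _ (heeq ▸ List.mem_append_left _ this)
    · rw [heeq, heeq2]
      simp only [List.map_append, List.prod_append, List.map_cons, List.prod_cons,
        List.map_nil, List.prod_nil]
      ring

end SignedGraph
namespace SignedGraph

open Relation Finset

lemma signed_circuit_loop {G : SignedGraph} (hconn : G.Connected)
    (hneg : G.negativeness ≠ 1) {e a : ℕ} (he : e ∈ G.edges) (hloop : G.ends e = s(a, a)) :
    ∃ S, IsSubgraph S G ∧ IsSignedCircuit S ∧ e ∈ S.edges := by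
  have haV : a ∈ G.verts := G.ends_mem e he a (by rw [hloop]; simp)
  have hwnil : Walk G a a [a] [] := Walk.nil a haV
  rcases G.sgn_unit e he with hpos | hneg1
  · refine ⟨cycGraph G hwnil e he hloop, cycGraph_sub _ _ _, Or.inl ?_,
      Finset.mem_insert_self _ _⟩
    exact cycGraph_balanced hwnil (by simp) he hloop (by simp) (by simp [hpos])
  · set K := G.deleteEdge e with hK
    have hKsub : IsSubgraph K G := deleteEdge_subgraph G e
    have hKconn : K.Connected := connected_deleteEdge_loop hconn hloop
    have hKunb : ¬ K.Balanced := by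
      intro hbal
      obtain ⟨χ, hχ, hpos⟩ := posSwitch_of_balanced hbal
      have h1 : G.negativeness ≤ 1 := negativeness_le_one_of_posSwitch_delete hχ hpos
      have hGbal : G.Balanced := balanced_of_negativeness h1 hneg
      obtain ⟨χ', hχ', hpos'⟩ := posSwitch_of_balanced hGbal
      have h2 := hpos' e he a a hloop
      rw [hneg1, unit_sq (hχ' a)] at h2
      norm_num at h2
    obtain ⟨xd, yd, ws, fs, fD, hwD, hndD, hfD, hfDes, hdD, hsgnD, hvK, heK, hfDK⟩ :=
      exists_unb_cyc_in hKsub hKconn hKunb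
    set C := cycGraph G hwnil e he hloop with hCdef
    have hCunb : IsUnbalancedCircuit C :=
      cycGraph_unbalanced hwnil (by simp) he hloop (by simp) (by simp [hneg1])
    set D := cycGraph G hwD fD hfD hdD with hDdef
    have hDunb : IsUnbalancedCircuit D := cycGraph_unbalanced hwD hndD hfD hdD hfDes hsgnD
    have hDsub : IsSubgraph D G := cycGraph_sub hwD hfD hdD
    have hCsub : IsSubgraph C G := cycGraph_sub hwnil he hloop
    have hCverts : C.verts = {a} := by
      show [a].toFinset = {a}
      simp
    have heC : e ∈ C.edges := Finset.mem_insert_self _ _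
    have heD : e ∉ D.edges := by
      intro hmem
      have heK2 : e ∈ K.edges := by
        rcases Finset.mem_insert.mp hmem with rfl | hmem2
        · exact hfDK
        · exact heK e (List.mem_toFinset.mp hmem2)
      exact (mem_deleteEdge_edges.mp heK2).2 rfl
    have hedgeCD : C.edges ∩ D.edges = ∅ := by
      rw [Finset.eq_empty_iff_forall_notMem]
      intro g hg
      obtain ⟨hg1, hg2⟩ := Finset.mem_inter.mp hg
      have hge : g = e := by
        have : g ∈ insert e ([] : List ℕ).toFinset := hg1
        simpa using this
      exact heD (hge ▸ hg2)
    by_cases haD : a ∈ D.verts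
    · obtain ⟨S, hSsub, hSbarb, hSedges⟩ := barbell_trivial hCsub hDsub hCunb hDunb
        (by rw [hCverts]; exact Finset.singleton_inter_of_mem haD) hedgeCD
      exact ⟨S, hSsub, Or.inr hSbarb, hSedges heC⟩
    · have hxdK : xd ∈ K.verts := hvK xd hwD.start_mem
      have hxdD : xd ∈ D.verts := List.mem_toFinset.mpr hwD.start_mem
      have hreach : ReflTransGen K.Adj a xd := hKconn.2 a haV xd hxdK
      obtain ⟨z, ps, qs, hwp, hndp, hzD, honly⟩ := reach_to_set hxdD hxdK hreach
      have hwpG : Walk G a z ps qs := hwp.of_subgraph hKsub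
      obtain ⟨S, hSsub, hSbarb, hSedges⟩ := barbell_path hwpG hndp hCsub hDsub hCunb hDunb
        (by rw [hCverts]; exact Finset.singleton_inter_of_notMem haD)
        (fun w _ hwC => by
          rw [hCverts, Finset.mem_singleton] at hwC
          exact hwC)
        (by rw [hCverts]; exact Finset.mem_singleton_self a) honly hzD
      exact ⟨S, hSsub, Or.inr hSbarb,
        hSedges (Finset.mem_union_left _ (Finset.mem_union_right _ heC))⟩

lemma signed_circuit_bridge {G : SignedGraph} (hconn : G.Connected)
    (hcut : ¬ ∃ b, G.IsCutEdge b ∧ ∃ H, IsComponent (G.deleteEdge b) H ∧ H.Balanced)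
    {e u v : ℕ} (he : e ∈ G.edges) (hends : G.ends e = s(u, v))
    (hbr : ¬ ReflTransGen (G.deleteEdge e).Adj u v) :
    ∃ S, IsSubgraph S G ∧ IsSignedCircuit S ∧ e ∈ S.edges := by
  have huv : u ≠ v := by rintro rfl; exact hbr .refl
  have huG : u ∈ G.verts := G.ends_mem e he u (by rw [hends]; simp)
  have hvG : v ∈ G.verts := G.ends_mem e he v (by rw [hends]; simp)
  set K := G.deleteEdge e with hKdef
  have hKsub : IsSubgraph K G := deleteEdge_subgraph G e
  have hcute : G.IsCutEdge e := ⟨he, u, v, hends, hbr⟩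
  have hnb : ∀ H, IsComponent K H → ¬ H.Balanced := fun H hH hb =>
    hcut ⟨e, hcute, H, hH, hb⟩
  have huK : u ∈ K.verts := huG
  have hvK : v ∈ K.verts := hvG
  set Ku := compAt K u with hKu
  set Kv := compAt K v with hKv
  have hKuG : IsSubgraph Ku G := (compAt_sub K u).transfer hKsub
  have hKvG : IsSubgraph Kv G := (compAt_sub K v).transfer hKsub
  obtain ⟨x₁, y₁, vs₁, es₁, f₁, hw₁, hnd₁, hf₁, hfes₁, hd₁, hsgn₁, hvKu, heKu, hfKu⟩ :=
    exists_unb_cyc_in hKuG (compAt_connected huK) (hnb Ku (compAt_isComponent huK))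
  obtain ⟨x₂, y₂, vs₂, es₂, f₂, hw₂, hnd₂, hf₂, hfes₂, hd₂, hsgn₂, hvKv, heKv, hfKv⟩ :=
    exists_unb_cyc_in hKvG (compAt_connected hvK) (hnb Kv (compAt_isComponent hvK))
  set D₁ := cycGraph G hw₁ f₁ hf₁ hd₁ with hD₁
  set D₂ := cycGraph G hw₂ f₂ hf₂ hd₂ with hD₂
  have hD₁unb : IsUnbalancedCircuit D₁ := cycGraph_unbalanced hw₁ hnd₁ hf₁ hd₁ hfes₁ hsgn₁
  have hD₂unb : IsUnbalancedCircuit D₂ := cycGraph_unbalanced hw₂ hnd₂ hf₂ hd₂ hfes₂ hsgn₂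
  have hD₁sub : IsSubgraph D₁ G := cycGraph_sub hw₁ hf₁ hd₁
  have hD₂sub : IsSubgraph D₂ G := cycGraph_sub hw₂ hf₂ hd₂
  have hD₁Ku : ∀ w ∈ D₁.verts, w ∈ Ku.verts := fun w hw =>
    hvKu w (List.mem_toFinset.mp hw)
  have hD₂Kv : ∀ w ∈ D₂.verts, w ∈ Kv.verts := fun w hw =>
    hvKv w (List.mem_toFinset.mp hw)
  -- path on the u side
  have hx₁Ku : x₁ ∈ Ku.verts := hvKu x₁ hw₁.start_mem
  have hreach₁ : ReflTransGen K.Adj u x₁ := (mem_compAt_verts.mp hx₁Ku).2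
  obtain ⟨z₁, p₁, q₁, hwp₁, hndp₁, hz₁D, honly₁⟩ := reach_to_set
    (List.mem_toFinset.mpr hw₁.start_mem : x₁ ∈ D₁.verts)
    ((compAt_sub K u).1 hx₁Ku) hreach₁
  have hx₂Kv : x₂ ∈ Kv.verts := hvKv x₂ hw₂.start_mem
  have hreach₂ : ReflTransGen K.Adj v x₂ := (mem_compAt_verts.mp hx₂Kv).2
  obtain ⟨z₂, p₂, q₂, hwp₂, hndp₂, hz₂D, honly₂⟩ := reach_to_set
    (List.mem_toFinset.mpr hw₂.start_mem : x₂ ∈ D₂.verts)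
    ((compAt_sub K v).1 hx₂Kv) hreach₂
  -- all vertices of p₁ lie in Ku, of p₂ in Kv
  have hp₁Ku : ∀ w ∈ p₁, w ∈ Ku.verts := fun w hw =>
    mem_compAt_verts.mpr ⟨hwp₁.verts_mem w hw, hwp₁.reach_from_start hw⟩
  have hp₂Kv : ∀ w ∈ p₂, w ∈ Kv.verts := fun w hw =>
    mem_compAt_verts.mpr ⟨hwp₂.verts_mem w hw, hwp₂.reach_from_start hw⟩
  have hdisjKuv : ∀ w, w ∈ Ku.verts → w ∈ Kv.verts → False := fun w h1 h2 =>
    compAt_verts_disj hbr h1 h2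
  -- assemble the path:  z₁ … u  e  v … z₂
  have hwrev : Walk G z₁ u p₁.reverse q₁.reverse :=
    (hwp₁.reverse).of_subgraph hKsub
  have hwsnoc : Walk G z₁ v (p₁.reverse ++ [v]) (q₁.reverse ++ [e]) :=
    hwrev.snoc e he hends hvG
  have hwp₂G : Walk G v z₂ p₂ q₂ := hwp₂.of_subgraph hKsub
  have hwfull : Walk G z₁ z₂ ((p₁.reverse ++ [v]) ++ p₂.tail) ((q₁.reverse ++ [e]) ++ q₂) :=
    hwsnoc.join hwp₂G
  obtain ⟨t₂, ht₂⟩ := hwp₂.head_cons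
  have hlist : (p₁.reverse ++ [v]) ++ p₂.tail = p₁.reverse ++ p₂ := by
    rw [List.append_assoc]
    congr 1
    rw [ht₂]
    rfl
  rw [hlist] at hwfull
  have hdisj12 : List.Disjoint p₁.reverse p₂ := by
    intro w hw1 hw2
    exact hdisjKuv w (hp₁Ku w (List.mem_reverse.mp hw1)) (hp₂Kv w hw2)
  have hndfull : (p₁.reverse ++ p₂).Nodup :=
    List.Nodup.append (List.nodup_reverse.mpr hndp₁) hndp₂ hdisj12
  have hvvD : D₁.verts ∩ D₂.verts = ∅ := by
    rw [Finset.eq_empty_iff_forall_notMem]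
    intro w hw
    obtain ⟨h1, h2⟩ := Finset.mem_inter.mp hw
    exact hdisjKuv w (hD₁Ku w h1) (hD₂Kv w h2)
  obtain ⟨S, hSsub, hSbarb, hSedges⟩ := barbell_path hwfull hndfull hD₁sub hD₂sub
    hD₁unb hD₂unb hvvD
    (by
      intro w hw hwD
      rcases List.mem_append.mp hw with h1 | h1
      · exact honly₁ w (List.mem_reverse.mp h1) hwD
      · exact absurd (hD₁Ku w hwD) (fun hh => hdisjKuv w hh (hp₂Kv w h1)))
    hz₁D
    (by
      intro w hw hwD
      rcases List.mem_append.mp hw with h1 | h1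
      · exact absurd (hD₂Kv w hwD)
          (fun hh => hdisjKuv w (hp₁Ku w (List.mem_reverse.mp h1)) hh)
      · exact honly₂ w h1 hwD)
    hz₂D
  refine ⟨S, hSsub, Or.inr hSbarb, hSedges ?_⟩
  refine Finset.mem_union_left _ (Finset.mem_union_left _ ?_)
  rw [List.mem_toFinset]
  exact List.mem_append_left _ (List.mem_append_right _ (by simp))

end SignedGraph
namespace SignedGraph

open Relation Finset

lemma signed_circuit_nonbridge {G : SignedGraph} (hconn : G.Connected)
    (hneg : G.negativeness ≠ 1) {e u v : ℕ} (he : e ∈ G.edges)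
    (hends : G.ends e = s(u, v)) (huv : u ≠ v)
    (hbr : ReflTransGen (G.deleteEdge e).Adj u v) :
    ∃ S, IsSubgraph S G ∧ IsSignedCircuit S ∧ e ∈ S.edges := by
  set K := G.deleteEdge e with hKdef
  have hKsub : IsSubgraph K G := deleteEdge_subgraph G e
  have hKconn : K.Connected := connected_deleteEdge_of_reach hconn he hends hbr
  have huG : u ∈ G.verts := G.ends_mem e he u (by rw [hends]; simp)
  have hvG : v ∈ G.verts := G.ends_mem e he v (by rw [hends]; simp)
  have huK : u ∈ K.verts := huG
  have hvK : v ∈ K.verts := hvG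
  obtain ⟨vs0, es0, hw0⟩ := Walk.of_reach (G := K) huK (reach_symm hbr)
  obtain ⟨vs, es, hwK, hnd, _, _⟩ := hw0.dedup
  have hwG : Walk G v u vs es := hwK.of_subgraph hKsub
  have hfes : e ∉ es := fun hmem => (mem_deleteEdge_edges.mp (hwK.edges_mem e hmem)).2 rfl
  have hunit_list : ∀ l : List ℕ, (∀ g ∈ l, g ∈ G.edges) →
      (l.map G.sgn).prod = 1 ∨ (l.map G.sgn).prod = -1 := fun l hl =>
    unit_list_prod (fun s hs => by
      rcases List.mem_map.mp hs with ⟨g, hg, rfl⟩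
      exact G.sgn_unit g (hl g hg))
  have hsunit := unit_mul (G.sgn_unit e he) (hunit_list es hwG.edges_mem)
  rcases hsunit with h1 | h1
  · exact ⟨cycGraph G hwG e he hends, cycGraph_sub _ _ _,
      Or.inl (cycGraph_balanced hwG hnd he hends hfes h1), Finset.mem_insert_self _ _⟩
  set C := cycGraph G hwG e he hends with hCdef
  have hCunb : IsUnbalancedCircuit C := cycGraph_unbalanced hwG hnd he hends hfes h1
  have hCsub : IsSubgraph C G := cycGraph_sub hwG he hends
  have hKunb : ¬ K.Balanced := by
    intro hbal
    obtain ⟨χ, hχ, hpos⟩ := posSwitch_of_balanced hbal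
    have hGbal : G.Balanced :=
      balanced_of_negativeness (negativeness_le_one_of_posSwitch_delete hχ hpos) hneg
    have h2 := cyc_pos_of_balanced hGbal hwG he hends
    rw [h2] at h1
    norm_num at h1
  obtain ⟨xd, yd, ws, fs, fD, hwDG, hndD, hfD, hfDes, hdD, hsgnD, hvKD, heKD, hfDK⟩ :=
    exists_unb_cyc_in hKsub hKconn hKunb
  set D := cycGraph G hwDG fD hfD hdD with hDdef
  have hDunb : IsUnbalancedCircuit D := cycGraph_unbalanced hwDG hndD hfD hdD hfDes hsgnD
  have hDsub : IsSubgraph D G := cycGraph_sub hwDG hfD hdD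
  have heC : e ∈ C.edges := Finset.mem_insert_self _ _
  have heD : e ∉ D.edges := by
    intro hmem
    have heK2 : e ∈ K.edges := by
      rcases Finset.mem_insert.mp hmem with rfl | hmem2
      · exact hfDK
      · exact heKD e (List.mem_toFinset.mp hmem2)
    exact (mem_deleteEdge_edges.mp heK2).2 rfl
  by_cases hhit : ∃ w ∈ vs, w ∈ ws.toFinset
  · -- the circuit C meets D
    obtain ⟨b', p₁, q₁, p₁', q₁', hwB, hwRest, hveqA, heeqA, hb'D, honlyB, hsufA⟩ :=
      hwK.split_first' ws.toFinset hhit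
    have hndp₁' : p₁'.Nodup := hnd.sublist hsufA.sublist
    have hndp₁ : p₁.Nodup := (hveqA ▸ hnd).sublist (List.sublist_append_left _ _)
    obtain ⟨a', p₂, q₂, p₂', q₂', hwA, hwA', hveqB, heeqB, ha'D, honlyA, hsufB⟩ :=
      hwRest.reverse.split_first' ws.toFinset
        ⟨b', by rw [List.mem_reverse]; exact hwRest.start_mem, hb'D⟩
    have hndrev : p₁'.reverse.Nodup := List.nodup_reverse.mpr hndp₁'
    have hndp₂ : p₂.Nodup := (hveqB ▸ hndrev).sublist (List.sublist_append_left _ _)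
    have hndp₂' : p₂'.Nodup := hndrev.sublist hsufB.sublist
    have hp₂sub : ∀ w ∈ p₂, w ∈ p₁' := fun w hw =>
      List.mem_reverse.mp (hveqB ▸ List.mem_append_left _ hw)
    have hp₁sub : ∀ w ∈ p₁, w ∈ vs := fun w hw => hveqA ▸ List.mem_append_left _ hw
    obtain ⟨t₁', hp₁'c⟩ := hwRest.head_cons
    have hdisjA : p₁.Disjoint p₁'.tail := (List.nodup_append'.mp (hveqA ▸ hnd)).2.2
    have hp₁p₁' : ∀ w, w ∈ p₁ → w ∈ p₁' → w = b' := by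
      intro w hw1 hw2
      rw [hp₁'c, List.mem_cons] at hw2
      rcases hw2 with rfl | hw2
      · rfl
      · exact absurd (show w ∈ p₁'.tail by rw [hp₁'c]; exact hw2) (hdisjA hw1)
    have hb'vs : b' ∈ vs := hp₁sub b' hwB.end_mem
    by_cases hab : a' = b'
    · -- C and D meet in exactly one vertex: trivial barbell
      have hone : ∀ w ∈ vs, w ∈ ws.toFinset → w = b' := by
        intro w hwvs hwD
        rcases List.mem_append.mp (hveqA ▸ hwvs) with h | h
        · exact honlyB w h hwD
        · have hw' : w ∈ p₁'.reverse := List.mem_reverse.mpr (List.mem_of_mem_tail h)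
          rcases List.mem_append.mp (hveqB ▸ hw') with h2 | h2
          · exact (honlyA w h2 hwD).trans hab
          · exfalso
            by_cases hq : q₂' = []
            · obtain ⟨_, hp2⟩ := Walk.eq_nil (hq ▸ hwA')
              rw [hp2] at h2
              simp at h2
            · exact (hwA'.ne_of_nodup hndp₂' hq) hab
      have hinter : C.verts ∩ D.verts = {b'} := by
        apply Finset.ext
        intro w
        constructor
        · intro hw2
          obtain ⟨hw3, hw4⟩ := Finset.mem_inter.mp hw2
          rw [Finset.mem_singleton]
          exact hone w (List.mem_toFinset.mp hw3) hw4
        · intro hw2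
          rw [Finset.mem_singleton] at hw2
          subst hw2
          exact Finset.mem_inter.mpr ⟨List.mem_toFinset.mpr hb'vs, hb'D⟩
      have hedgeCD : C.edges ∩ D.edges = ∅ := by
        rw [Finset.eq_empty_iff_forall_notMem]
        intro g hg
        obtain ⟨hg1, hg2⟩ := Finset.mem_inter.mp hg
        rcases Finset.mem_insert.mp hg1 with rfl | hg1'
        · exact heD hg2
        · obtain ⟨p, q, hpq, hpvs, hqvs, hpqne⟩ :=
            hwG.consecutive hnd g (List.mem_toFinset.mp hg1')
          have hpD : p ∈ D.verts := D.ends_mem g hg2 p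
            (by rw [(hDsub.2.2 g hg2).1, hpq]; simp)
          have hqD : q ∈ D.verts := D.ends_mem g hg2 q
            (by rw [(hDsub.2.2 g hg2).1, hpq]; simp)
          exact hpqne ((hone p hpvs hpD).trans (hone q hqvs hqD).symm)
      obtain ⟨S, hSsub, hSbarb, hSedges⟩ :=
        barbell_trivial hCsub hDsub hCunb hDunb hinter hedgeCD
      exact ⟨S, hSsub, Or.inr hSbarb, hSedges heC⟩
    · -- theta configuration: one of the two circuits through e is balanced
      have ha'ws : a' ∈ ws := List.mem_toFinset.mp ha'D
      have hb'ws : b' ∈ ws := List.mem_toFinset.mp hb'D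
      obtain ⟨av₁, ae₁, av₂, ae₂, hwArc₁, hwArc₂, hndA₁, hndA₂, hinterA, hA₁ws, hA₂ws,
        hA₁es, hA₂es, hprodA⟩ := cyc_split hwDG hndD hfD hdD ha'ws hb'ws hab
      have hwAG : Walk G u a' p₂ q₂ := hwA.of_subgraph hKsub
      have hwBrev : Walk G b' v p₁.reverse q₁.reverse := (hwB.reverse).of_subgraph hKsub
      obtain ⟨tr, htr⟩ := (hwB.reverse).head_cons
      have hndtr : tr.Nodup ∧ b' ∉ tr := by
        have h2 := htr ▸ (List.nodup_reverse.mpr hndp₁)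
        exact ⟨(List.nodup_cons.mp h2).2, (List.nodup_cons.mp h2).1⟩
      have htail_eq : p₁.reverse.tail = tr := by rw [htr]; rfl
      have hmem_tr : ∀ w ∈ tr, w ∈ p₁ := fun w hw =>
        List.mem_reverse.mp (htr ▸ List.mem_cons_of_mem _ hw)
      have key : ∀ av ae, Walk G a' b' av ae → av.Nodup → (∀ w ∈ av, w ∈ ws) →
          (∀ g ∈ ae, g ∈ fD :: fs) →
          G.sgn e * ((((q₂ ++ ae) ++ q₁.reverse)).map G.sgn).prod = 1 →
          ∃ S, IsSubgraph S G ∧ IsSignedCircuit S ∧ e ∈ S.edges := by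
        intro av ae hwArc hndarc harcws harces hsgn1
        have hfull : Walk G u v ((p₂ ++ av.tail) ++ p₁.reverse.tail)
            ((q₂ ++ ae) ++ q₁.reverse) := (hwAG.join hwArc).join hwBrev
        obtain ⟨ta, havc⟩ := hwArc.head_cons
        have hndtail_av : av.tail.Nodup := by
          rw [havc]
          exact (List.nodup_cons.mp (havc ▸ hndarc)).2
        have ha'nt : a' ∉ av.tail := by
          rw [havc]
          exact (List.nodup_cons.mp (havc ▸ hndarc)).1
        have hd1 : List.Disjoint p₂ av.tail := by
          intro w hw1 hw2
          have hwav : w ∈ ws := harcws w (List.mem_of_mem_tail hw2)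
          have hwa := honlyA w hw1 (List.mem_toFinset.mpr hwav)
          exact ha'nt (hwa ▸ hw2)
        have hd2 : List.Disjoint p₂ tr := by
          intro w hw1 hw2
          have h2 := hp₁p₁' w (hmem_tr w hw2) (hp₂sub w hw1)
          exact hndtr.2 (h2 ▸ hw2)
        have hd3 : List.Disjoint av.tail tr := by
          intro w hw1 hw2
          have hwav : w ∈ ws := harcws w (List.mem_of_mem_tail hw1)
          have h2 := honlyB w (hmem_tr w hw2) (List.mem_toFinset.mpr hwav)
          exact hndtr.2 (h2 ▸ hw2)
        have hndZ : ((p₂ ++ av.tail) ++ p₁.reverse.tail).Nodup := by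
          rw [htail_eq]
          refine List.Nodup.append (List.Nodup.append hndp₂ hndtail_av hd1) hndtr.1 ?_
          intro w hw1 hw2
          rcases List.mem_append.mp hw1 with h | h
          · exact hd2 h hw2
          · exact hd3 h hw2
        have hfesZ : e ∉ (q₂ ++ ae) ++ q₁.reverse := by
          intro hmem
          have heK2 : e ∈ K.edges := by
            rcases List.mem_append.mp hmem with h | h
            · rcases List.mem_append.mp h with h2 | h2
              · exact hwA.edges_mem e h2
              · rcases List.mem_cons.mp (harces e h2) with rfl | h3
                · exact hfDK
                · exact heKD e h3
            · exact hwB.edges_mem e (List.mem_reverse.mp h)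
          exact (mem_deleteEdge_edges.mp heK2).2 rfl
        exact ⟨cycGraph G hfull e he (hends.trans Sym2.eq_swap), cycGraph_sub _ _ _,
          Or.inl (cycGraph_balanced hfull hndZ he (hends.trans Sym2.eq_swap) hfesZ hsgn1),
          Finset.mem_insert_self _ _⟩
      -- sign bookkeeping
      have hexp : ∀ ae : List ℕ, (((q₂ ++ ae) ++ q₁.reverse).map G.sgn).prod =
          (q₂.map G.sgn).prod * (ae.map G.sgn).prod * (q₁.map G.sgn).prod := by
        intro ae
        rw [List.map_append, List.map_append, List.prod_append, List.prod_append,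
          List.map_reverse, List.prod_reverse]
      have hq₂G : ∀ g ∈ q₂, g ∈ G.edges := fun g hg => hKsub.2.1 (hwA.edges_mem g hg)
      have hq₁G : ∀ g ∈ q₁, g ∈ G.edges := fun g hg => hKsub.2.1 (hwB.edges_mem g hg)
      set A := (q₂.map G.sgn).prod with hAdef
      set B := (q₁.map G.sgn).prod with hBdef
      set X := (ae₁.map G.sgn).prod with hXdef
      set Y := (ae₂.map G.sgn).prod with hYdef
      have hs1 : G.sgn e * (((q₂ ++ ae₁) ++ q₁.reverse).map G.sgn).prod =
          G.sgn e * (A * X * B) := by rw [hexp ae₁]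
      have hs2 : G.sgn e * (((q₂ ++ ae₂.reverse) ++ q₁.reverse).map G.sgn).prod =
          G.sgn e * (A * Y * B) := by
        rw [hexp ae₂.reverse, List.map_reverse, List.prod_reverse]
      have hprodZ : (G.sgn e * (A * X * B)) * (G.sgn e * (A * Y * B)) = -1 := by
        calc (G.sgn e * (A * X * B)) * (G.sgn e * (A * Y * B))
            = (G.sgn e * G.sgn e) * (A * A) * (B * B) * (X * Y) := by ring
          _ = X * Y := by
              rw [unit_sq (G.sgn_unit e he), unit_sq (hunit_list q₂ hq₂G),
                unit_sq (hunit_list q₁ hq₁G)]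
              ring
          _ = -1 := by rw [hXdef, hYdef, hprodA, hsgnD]
      have hlistG : ∀ g ∈ (q₂ ++ ae₁) ++ q₁.reverse, g ∈ G.edges := by
        intro g hg
        rcases List.mem_append.mp hg with h | h
        · rcases List.mem_append.mp h with h2 | h2
          · exact hq₂G g h2
          · rcases List.mem_cons.mp (hA₁es g h2) with rfl | h3
            · exact hfD
            · exact hwDG.edges_mem g h3
        · exact hq₁G g (List.mem_reverse.mp h)
      rcases unit_mul (G.sgn_unit e he)
          (hunit_list ((q₂ ++ ae₁) ++ q₁.reverse) hlistG) with hZ1 | hZ1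
      · exact key av₁ ae₁ hwArc₁ hndA₁ hA₁ws hA₁es hZ1
      · have hZ2 : G.sgn e * (((q₂ ++ ae₂.reverse) ++ q₁.reverse).map G.sgn).prod = 1 := by
          rw [hs2]
          have h3 : G.sgn e * (A * X * B) = -1 := by rw [← hs1]; exact hZ1
          have h4 := hprodZ
          rw [h3] at h4
          linarith
        exact key av₂.reverse ae₂.reverse hwArc₂.reverse (List.nodup_reverse.mpr hndA₂)
          (fun w hw => hA₂ws w (List.mem_reverse.mp hw))
          (fun g hg => hA₂es g (List.mem_reverse.mp hg)) hZ2
  · -- C and D are disjoint: connect them by a path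
    have hvvCD : C.verts ∩ D.verts = ∅ := by
      rw [Finset.eq_empty_iff_forall_notMem]
      intro w hw
      obtain ⟨h1, h2⟩ := Finset.mem_inter.mp hw
      exact hhit ⟨w, List.mem_toFinset.mp h1, h2⟩
    have hxdK : xd ∈ K.verts := hvKD xd hwDG.start_mem
    have hxdD : xd ∈ D.verts := List.mem_toFinset.mpr hwDG.start_mem
    have hreach : ReflTransGen K.Adj v xd := hKconn.2 v hvK xd hxdK
    obtain ⟨d', ps1, qs1, hwp1, _, hd'D, honlyD1⟩ := reach_to_set hxdD hxdK hreach
    have hvC : v ∈ C.verts := List.mem_toFinset.mpr hwG.start_mem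
    obtain ⟨z₁, p, q, p', q', hwp2, _, hveq2, _, hz₁C, honlyC, _⟩ :=
      hwp1.reverse.split_first C.verts hvC
    obtain ⟨ps, qs, hwp3, hndp, hpsub, _⟩ := hwp2.dedup
    have hpsD : ∀ w ∈ ps, w ∈ D.verts → w = d' := by
      intro w hw hwD
      have h2 : w ∈ ps1.reverse := hveq2 ▸ List.mem_append_left _ (hpsub w hw)
      exact honlyD1 w (List.mem_reverse.mp h2) hwD
    have hpsC : ∀ w ∈ ps, w ∈ C.verts → w = z₁ := fun w hw => honlyC w (hpsub w hw)
    have hwp4 : Walk G z₁ d' ps.reverse qs.reverse := (hwp3.reverse).of_subgraph hKsub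
    obtain ⟨S, hSsub, hSbarb, hSedges⟩ := barbell_path hwp4 (List.nodup_reverse.mpr hndp)
      hCsub hDsub hCunb hDunb hvvCD
      (fun w hw hwC => hpsC w (List.mem_reverse.mp hw) hwC) hz₁C
      (fun w hw hwD => hpsD w (List.mem_reverse.mp hw) hwD) hd'D
    exact ⟨S, hSsub, Or.inr hSbarb,
      hSedges (Finset.mem_union_left _ (Finset.mem_union_right _ heC))⟩

end SignedGraph
namespace SignedGraph

open Relation Finset

theorem exists_signed_circuit {G : SignedGraph} (hconn : G.Connected)
    (hneg : G.negativeness ≠ 1)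
    (hcut : ¬ ∃ b, G.IsCutEdge b ∧ ∃ H, IsComponent (G.deleteEdge b) H ∧ H.Balanced)
    {e : ℕ} (he : e ∈ G.edges) :
    ∃ S, IsSubgraph S G ∧ IsSignedCircuit S ∧ e ∈ S.edges := by
  obtain ⟨u, v, hends⟩ := sym2_rep (G.ends e)
  by_cases huv : u = v
  · exact signed_circuit_loop hconn hneg he (huv ▸ hends)
  · by_cases hbr : ReflTransGen (G.deleteEdge e).Adj u v
    · exact signed_circuit_nonbridge hconn hneg he hends huv hbr
    · exact signed_circuit_bridge hconn hcut he hends hbr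

theorem backward_dir {G : SignedGraph} (hconn : G.Connected) (hneg : G.negativeness ≠ 1)
    (hcut : ¬ ∃ b, G.IsCutEdge b ∧ ∃ H, IsComponent (G.deleteEdge b) H ∧ H.Balanced) :
    G.Coverable := by
  classical
  have hper := fun (x : {e // e ∈ G.edges}) => exists_signed_circuit hconn hneg hcut x.2
  choose Sfun hSsub hScirc hSmem using hper
  refine ⟨G.edges.attach.val.map Sfun, ?_, ?_⟩
  · intro S hS
    rw [Multiset.mem_map] at hS
    obtain ⟨x, _, rfl⟩ := hS
    exact ⟨hSsub x, Or.imp id id (hScirc x)⟩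
  · intro f hf
    unfold coverCount
    rw [Multiset.card_pos]
    have hmem : Sfun ⟨f, hf⟩ ∈
        Multiset.filter (fun S => f ∈ S.edges) (G.edges.attach.val.map Sfun) := by
      rw [Multiset.mem_filter]
      refine ⟨?_, hSmem ⟨f, hf⟩⟩
      rw [Multiset.mem_map]
      exact ⟨⟨f, hf⟩, Finset.mem_def.mp (Finset.mem_attach _ _), rfl⟩
    exact fun hzero => by rw [hzero] at hmem; exact absurd hmem (Multiset.notMem_zero _)

end SignedGraph

namespace SignedGraph

/-- **Proposition.** A connected signed graph `G` is coverable iff its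
negativeness is not `1` and no cut edge `b` leaves a balanced component in `G - b`. -/
theorem coverable_iff_negativeness_ne_one_and_no_balanced_component
    (G : SignedGraph) (hconn : G.Connected) :
    G.Coverable ↔
      (G.negativeness ≠ 1 ∧
        ¬ ∃ b, G.IsCutEdge b ∧ ∃ H, IsComponent (G.deleteEdge b) H ∧ H.Balanced) := by
  constructor
  · intro hcov
    exact ⟨forward_negativeness hcov, forward_cut hconn hcov⟩
  · rintro ⟨h1, h2⟩
    exact backward_dir hconn h1 h2

end SignedGraph
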